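/- arXiv:1807.06097 — 5 statements merged into one kernel-verified Lean document; each statement's English description precedes it below -/
import Mathlib

section
/- Let Q be a densely ordered linear order with at least two elements (endpoints allowed). If D₁ and D₂ are definable subsets of Q^n with D₁ a proper subset of D₂, then there is no definable bijection from D₁ onto D₂. (In other words, every dense linear order satisfies the definable pigeonhole principle PHP.) -/
open FirstOrder FirstOrder.Language

attribute [local instance] FirstOrder.Language.orderStructure

/-- A subset of `Q^n` is definable if it is defined by a first-order formula in the
language of orders with finitely many parameters from `Q`. -/
def DLODefinable {Q : Type*} [LinearOrder Q] {n : ℕ} (s : Set (Fin n → Q)) : Prop :=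
  ∃ A : Set Q, A.Finite ∧ A.Definable Language.order s

/-- The graph of `f` restricted to `D₁`, as a subset of `Q^(n+m)`. -/
def graphOn {Q : Type*} {n m : ℕ} (D₁ : Set (Fin n → Q))
    (f : (Fin n → Q) → (Fin m → Q)) : Set (Fin (n + m) → Q) :=
  {z | ∃ x ∈ D₁, z = Fin.append x (f x)}

/-- A definable bijection from `D₁ ⊆ Q^n` onto `D₂ ⊆ Q^m`: a bijection from `D₁` onto `D₂`
whose graph is a definable subset of `Q^(n+m)`. -/
def DefBij {Q : Type*} [LinearOrder Q] {n m : ℕ} (D₁ : Set (Fin n → Q))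
    (D₂ : Set (Fin m → Q)) : Prop :=
  ∃ f : (Fin n → Q) → (Fin m → Q), Set.BijOn f D₁ D₂ ∧ DLODefinable (graphOn D₁ f)

section Aux

variable {Q : Type*} [LinearOrder Q]

/-- Quantifier-free order-equivalence of two tuples over a parameter set `B`. -/
def Equ (B : Set Q) {γ : Type*} (s t : γ → Q) : Prop :=
  (∀ i j, s i ≤ s j ↔ t i ≤ t j) ∧
    ∀ b ∈ B, ∀ i, (s i ≤ b ↔ t i ≤ b) ∧ (b ≤ s i ↔ b ≤ t i)

namespace Equ

variable {B : Set Q} {γ δ : Type*} {s t : γ → Q}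

lemma refl (s : γ → Q) : Equ B s s :=
  ⟨fun _ _ => Iff.rfl, fun _ _ _ => ⟨Iff.rfl, Iff.rfl⟩⟩

lemma symm (h : Equ B s t) : Equ B t s :=
  ⟨fun i j => (h.1 i j).symm, fun b hb i => ⟨(h.2 b hb i).1.symm, (h.2 b hb i).2.symm⟩⟩

lemma comp (h : Equ B s t) (g : δ → γ) : Equ B (s ∘ g) (t ∘ g) :=
  ⟨fun i j => h.1 (g i) (g j), fun b hb i => h.2 b hb (g i)⟩

lemma lt_iff (h : Equ B s t) (i j : γ) : s i < s j ↔ t i < t j := by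
  simp only [lt_iff_le_not_ge, h.1]

lemma eq_iff (h : Equ B s t) (i j : γ) : s i = s j ↔ t i = t j := by
  simp only [le_antisymm_iff, h.1]

end Equ

/-- A pair of values tracked by a pair of equivalent tuples: either a common coordinate,
or a common parameter from `B`. -/
def Track (B : Set Q) {γ : Type*} (s t : γ → Q) (a a' : Q) : Prop :=
  (∃ i, s i = a ∧ t i = a') ∨ (a = a' ∧ a ∈ B)

lemma Track.le_iff {B : Set Q} {γ : Type*} {s t : γ → Q} (h : Equ B s t) {a a' c c' : Q}
    (h1 : Track B s t a a') (h2 : Track B s t c c') : a ≤ c ↔ a' ≤ c' := by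
  rcases h1 with ⟨i, rfl, rfl⟩ | ⟨rfl, hb⟩ <;> rcases h2 with ⟨j, rfl, rfl⟩ | ⟨rfl, hb'⟩
  · exact h.1 i j
  · exact (h.2 c hb' i).1
  · exact (h.2 a hb j).2
  · exact Iff.rfl

lemma Track.eq_iff {B : Set Q} {γ : Type*} {s t : γ → Q} (h : Equ B s t) {a a' c c' : Q}
    (h1 : Track B s t a a') (h2 : Track B s t c c') : a = c ↔ a' = c' := by
  rw [le_antisymm_iff, le_antisymm_iff, h1.le_iff h h2, h2.le_iff h h1]

variable [DenselyOrdered Q] [Nontrivial Q]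

/-- The key extension lemma: an order-equivalence over `B` of finite tuples can absorb one
more point on the left side. -/
lemma Equ.extend {B : Set Q} (hfin : B.Finite)
    (hbot : ∀ x : Q, (∀ y, x ≤ y) → x ∈ B) (htop : ∀ x : Q, (∀ y, y ≤ x) → x ∈ B)
    {γ : Type*} [Finite γ] {s t : γ → Q} (h : Equ B s t) (u : Q) :
    ∃ v : Q, Equ B (fun o : Option γ => o.elim u s) (fun o : Option γ => o.elim v t) := by
  by_cases hus : ∃ i, s i = u
  · obtain ⟨i, hi⟩ := hus
    refine ⟨t i, ⟨?_, ?_⟩⟩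
    · rintro (_ | j) (_ | j')
      · simp only [Option.elim, ← hi]; exact h.1 i i
      · simp only [Option.elim, ← hi]; exact h.1 i j'
      · simp only [Option.elim, ← hi]; exact h.1 j i
      · simp only [Option.elim]; exact h.1 j j'
    · rintro b hb (_ | j)
      · simpa only [Option.elim, ← hi] using h.2 b hb i
      · exact h.2 b hb j
  · by_cases hub : u ∈ B
    · refine ⟨u, ⟨?_, ?_⟩⟩
      · rintro (_ | j) (_ | j')
        · exact Iff.rfl
        · simp only [Option.elim]; exact (h.2 u hub j').2
        · simp only [Option.elim]; exact (h.2 u hub j).1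
        · simp only [Option.elim]; exact h.1 j j'
      · rintro b hb (_ | j)
        · exact ⟨Iff.rfl, Iff.rfl⟩
        · exact h.2 b hb j
    · -- u is a "new" point
      have hune : ∀ i, s i ≠ u := fun i hi => hus ⟨i, hi⟩
      set L' : Set Q := (t '' {i | s i < u}) ∪ (B ∩ Set.Iio u) with hL'
      set R' : Set Q := (t '' {i | u < s i}) ∪ (B ∩ Set.Ioi u) with hR'
      have hL'fin : L'.Finite := ((Set.toFinite _).image t).union (hfin.inter_of_left _)
      have hR'fin : R'.Finite := ((Set.toFinite _).image t).union (hfin.inter_of_left _)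
      have hLR : ∀ a ∈ L', ∀ c ∈ R', a < c := by
        rintro a (⟨i, hi, rfl⟩ | ⟨haB, ha⟩) c (⟨j, hj, rfl⟩ | ⟨hcB, hc⟩)
        · exact (h.lt_iff i j).1 (lt_trans hi hj)
        · have : s i < c := lt_trans hi hc
          rw [lt_iff_le_not_ge] at this ⊢
          exact ⟨((h.2 c hcB i).1).1 this.1, fun hle => this.2 (((h.2 c hcB i).2).2 hle)⟩
        · have : a < s j := lt_trans ha hj
          rw [lt_iff_le_not_ge] at this ⊢
          exact ⟨((h.2 a haB j).2).1 this.1, fun hle => this.2 (((h.2 a haB j).1).2 hle)⟩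
        · exact lt_trans ha hc
      have key : ∃ v : Q, (∀ a' ∈ L', a' < v) ∧ (∀ c' ∈ R', v < c') := by
        rcases L'.eq_empty_or_nonempty with hL | hL <;>
          rcases R'.eq_empty_or_nonempty with hR | hR
        · obtain ⟨v⟩ : Nonempty Q := inferInstance
          exact ⟨v, by simp [hL], by simp [hR]⟩
        · -- L' empty, R' nonempty : go below min R'
          have hne : hR'fin.toFinset.Nonempty := by
            simpa [Set.Finite.toFinset] using hR
          set m := hR'fin.toFinset.min' hne with hm
          have hmR : m ∈ R' := by
            have := hR'fin.toFinset.min'_mem hne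
            rwa [Set.Finite.mem_toFinset] at this
          have : ∃ v, v < m := by
            by_contra hno
            push_neg at hno
            have hmB : m ∈ B := hbot m hno
            have hmu : m ≠ u := fun he => hub (he ▸ hmB)
            have hmlt : m < u := lt_of_le_of_ne (hno u) hmu
            have : m ∈ L' := Or.inr ⟨hmB, hmlt⟩
            simp [hL] at this
          obtain ⟨v, hv⟩ := this
          refine ⟨v, by simp [hL], fun c' hc' => lt_of_lt_of_le hv ?_⟩
          exact hR'fin.toFinset.min'_le c' (hR'fin.mem_toFinset.2 hc')
        · -- R' empty, L' nonempty : go above max L'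
          have hne : hL'fin.toFinset.Nonempty := by
            simpa [Set.Finite.toFinset] using hL
          set m := hL'fin.toFinset.max' hne with hm
          have hmL : m ∈ L' := by
            have := hL'fin.toFinset.max'_mem hne
            rwa [Set.Finite.mem_toFinset] at this
          have : ∃ v, m < v := by
            by_contra hno
            push_neg at hno
            have hmB : m ∈ B := htop m hno
            have hmu : m ≠ u := fun he => hub (he ▸ hmB)
            have hmgt : u < m := lt_of_le_of_ne (hno u) hmu.symm
            have : m ∈ R' := Or.inr ⟨hmB, hmgt⟩
            simp [hR] at this
          obtain ⟨v, hv⟩ := this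
          refine ⟨v, fun a' ha' => lt_of_le_of_lt ?_ hv, by simp [hR]⟩
          exact hL'fin.toFinset.le_max' a' (hL'fin.mem_toFinset.2 ha')
        · -- both nonempty
          have hneL : hL'fin.toFinset.Nonempty := by
            simpa [Set.Finite.toFinset] using hL
          have hneR : hR'fin.toFinset.Nonempty := by
            simpa [Set.Finite.toFinset] using hR
          have hmm : hL'fin.toFinset.max' hneL < hR'fin.toFinset.min' hneR := by
            apply hLR
            · rw [← hL'fin.mem_toFinset]; exact hL'fin.toFinset.max'_mem hneL
            · rw [← hR'fin.mem_toFinset]; exact hR'fin.toFinset.min'_mem hneR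
          obtain ⟨v, hv1, hv2⟩ := exists_between hmm
          refine ⟨v, fun a' ha' => lt_of_le_of_lt ?_ hv1, fun c' hc' => lt_of_lt_of_le hv2 ?_⟩
          · exact hL'fin.toFinset.le_max' a' (hL'fin.mem_toFinset.2 ha')
          · exact hR'fin.toFinset.min'_le c' (hR'fin.mem_toFinset.2 hc')
      obtain ⟨v, hvL, hvR⟩ := key
      have hv1 : ∀ i, (s i < u → t i < v) ∧ (u < s i → v < t i) := fun i =>
        ⟨fun hl => hvL _ (Or.inl ⟨i, hl, rfl⟩), fun hl => hvR _ (Or.inl ⟨i, hl, rfl⟩)⟩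
      have hv2 : ∀ b ∈ B, (b < u → b < v) ∧ (u < b → v < b) := fun b hb =>
        ⟨fun hl => hvL _ (Or.inr ⟨hb, hl⟩), fun hl => hvR _ (Or.inr ⟨hb, hl⟩)⟩
      refine ⟨v, ⟨?_, ?_⟩⟩
      · rintro (_ | j) (_ | j')
        · simp
        · simp only [Option.elim]
          constructor
          · intro hle
            exact ((hv1 j').2 (lt_of_le_of_ne hle (Ne.symm (hune j')))).le
          · intro hle
            by_contra hnle
            exact absurd hle (not_le_of_gt ((hv1 j').1 (lt_of_not_ge hnle)))
        · simp only [Option.elim]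
          constructor
          · intro hle
            exact ((hv1 j).1 (lt_of_le_of_ne hle (hune j))).le
          · intro hle
            by_contra hnle
            exact absurd hle (not_le_of_gt ((hv1 j).2 (lt_of_not_ge hnle)))
        · simp only [Option.elim]; exact h.1 j j'
      · rintro b hb (_ | j)
        · have hub' : u ≠ b := fun he => hub (he ▸ hb)
          constructor
          · constructor
            · intro hle
              exact ((hv2 b hb).2 (lt_of_le_of_ne hle hub')).le
            · intro hle
              by_contra hnle
              exact absurd hle (not_le_of_gt ((hv2 b hb).1 (lt_of_not_ge hnle)))
          · constructor
            · intro hle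
              exact ((hv2 b hb).1 (lt_of_le_of_ne hle (Ne.symm hub'))).le
            · intro hle
              by_contra hnle
              exact absurd hle (not_le_of_gt ((hv2 b hb).2 (lt_of_not_ge hnle)))
        · exact h.2 b hb j

/-- Reindexing lemma matching the `Option`-extension with `Fin.snoc`. -/
lemma optionElim_comp {α : Type*} {k : ℕ} (s : α → Q) (xs : Fin k → Q) (u : Q) :
    (fun o : Option (α ⊕ Fin k) => o.elim u (Sum.elim s xs)) ∘
      (Sum.elim (fun a : α => some (Sum.inl a))
        (fun i : Fin (k + 1) => Fin.lastCases none (fun j => some (Sum.inr j)) i)) =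
      Sum.elim s (Fin.snoc xs u) := by
  funext x
  rcases x with a | i
  · rfl
  · induction i using Fin.lastCases with
    | last => simp
    | cast j => simp

lemma Equ.extend_sum {B : Set Q} (hfin : B.Finite)
    (hbot : ∀ x : Q, (∀ y, x ≤ y) → x ∈ B) (htop : ∀ x : Q, (∀ y, y ≤ x) → x ∈ B)
    {α : Type*} [Finite α] {k : ℕ} {v w : α → Q} {xs ys : Fin k → Q}
    (h : Equ B (Sum.elim v xs) (Sum.elim w ys)) (u : Q) :
    ∃ z : Q, Equ B (Sum.elim v (Fin.snoc xs u)) (Sum.elim w (Fin.snoc ys z)) := by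
  obtain ⟨z, hz⟩ := h.extend hfin hbot htop u
  refine ⟨z, ?_⟩
  have := hz.comp (Sum.elim (fun a : α => some (Sum.inl a))
    (fun i : Fin (k + 1) => Fin.lastCases none (fun j => some (Sum.inr j)) i))
  rwa [optionElim_comp, optionElim_comp] at this

/-- Iterated extension: absorb a whole finite tuple. -/
lemma Equ.extend_fin {B : Set Q} (hfin : B.Finite)
    (hbot : ∀ x : Q, (∀ y, x ≤ y) → x ∈ B) (htop : ∀ x : Q, (∀ y, y ≤ x) → x ∈ B)
    {α : Type*} [Finite α] {s t : α → Q} (h : Equ B s t) :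
    ∀ {m : ℕ} (u : Fin m → Q), ∃ v : Fin m → Q, Equ B (Sum.elim s u) (Sum.elim t v) := by
  intro m
  induction m with
  | zero =>
    intro u
    refine ⟨u, ?_⟩
    have e : ∀ (a : α → Q) (u' : Fin 0 → Q),
        Sum.elim a u' = a ∘ Sum.elim id (fun i : Fin 0 => i.elim0) := by
      intro a u'
      funext x
      rcases x with a' | i
      · rfl
      · exact i.elim0
    rw [e s u, e t u]
    exact h.comp _
  | succ m ih =>
    intro u
    obtain ⟨v', hv'⟩ := ih (u ∘ Fin.castSucc)
    obtain ⟨z, hz⟩ := hv'.extend_sum hfin hbot htop (u (Fin.last m))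
    refine ⟨Fin.snoc v' z, ?_⟩
    have h1 : Fin.snoc (u ∘ Fin.castSucc) (u (Fin.last m)) = u := by
      funext i
      induction i using Fin.lastCases with
      | last => simp
      | cast j => simp
    rwa [h1] at hz

end Aux

section Invariance

variable {Q : Type*} [LinearOrder Q] {B : Set Q}

lemma term_realize_cases {γ : Type*} (tm : (Language.order[[B]]).Term γ) :
    (∃ i, ∀ v : γ → Q, tm.realize v = v i) ∨ (∃ b ∈ B, ∀ v : γ → Q, tm.realize v = b) := by
  induction tm with
  | var i => exact Or.inl ⟨i, fun _ => rfl⟩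
  | @func l f ts _ =>
    rcases f with f | c
    · exact f.elim
    · cases l with
      | zero => exact Or.inr ⟨c, c.2, fun v => rfl⟩
      | succ l => exact c.elim

lemma track_term {γ : Type*} {s t : γ → Q} (h : Equ B s t)
    (tm : (Language.order[[B]]).Term γ) : Track B s t (tm.realize s) (tm.realize t) := by
  rcases term_realize_cases tm with ⟨i, hi⟩ | ⟨b, hb, hbv⟩
  · exact Or.inl ⟨i, (hi s).symm, (hi t).symm⟩
  · exact Or.inr ⟨by rw [hbv s, hbv t], by rw [hbv s]; exact hb⟩

variable [DenselyOrdered Q] [Nontrivial Q]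

lemma realize_invariant (hfin : B.Finite)
    (hbot : ∀ x : Q, (∀ y, x ≤ y) → x ∈ B) (htop : ∀ x : Q, (∀ y, y ≤ x) → x ∈ B)
    {α : Type*} [Finite α] {k : ℕ} (φ : (Language.order[[B]]).BoundedFormula α k) :
    ∀ (v w : α → Q) (xs ys : Fin k → Q), Equ B (Sum.elim v xs) (Sum.elim w ys) →
      (φ.Realize v xs ↔ φ.Realize w ys) := by
  induction φ with
  | falsum => exact fun _ _ _ _ _ => Iff.rfl
  | equal t₁ t₂ =>
    intro v w xs ys h
    exact Track.eq_iff h (track_term h t₁) (track_term h t₂)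
  | rel R ts =>
    intro v w xs ys h
    rcases R with R | R
    · cases R
      exact Track.le_iff h (track_term h (ts 0)) (track_term h (ts 1))
    · exact R.elim
  | imp f₁ f₂ ih₁ ih₂ =>
    intro v w xs ys h
    simp only [BoundedFormula.realize_imp]
    rw [ih₁ _ _ _ _ h, ih₂ _ _ _ _ h]
  | all f ih =>
    intro v w xs ys h
    simp only [BoundedFormula.realize_all]
    constructor
    · intro H u'
      obtain ⟨z, hz⟩ := (h.symm).extend_sum hfin hbot htop u'
      exact (ih _ _ _ _ hz.symm).1 (H z)
    · intro H u'
      obtain ⟨z, hz⟩ := h.extend_sum hfin hbot htop u'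
      exact (ih _ _ _ _ hz).2 (H z)

/-- Invariance of definable sets under `Equ`. -/
lemma definable_invariant (hfin : B.Finite)
    (hbot : ∀ x : Q, (∀ y, x ≤ y) → x ∈ B) (htop : ∀ x : Q, (∀ y, y ≤ x) → x ∈ B)
    {N : ℕ} {D : Set (Fin N → Q)} (hD : B.Definable Language.order D)
    {x y : Fin N → Q} (hxy : Equ B x y) (hx : x ∈ D) : y ∈ D := by
  obtain ⟨φ, rfl⟩ := hD
  have e : ∀ a : Fin N → Q,
      Sum.elim a (default : Fin 0 → Q) = a ∘ Sum.elim id (fun i : Fin 0 => i.elim0) := by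
    intro a
    funext z
    rcases z with a' | i
    · rfl
    · exact i.elim0
  have hc : Equ B (Sum.elim x (default : Fin 0 → Q)) (Sum.elim y (default : Fin 0 → Q)) := by
    rw [e x, e y]
    exact hxy.comp _
  exact (realize_invariant hfin hbot htop φ x y default default hc).1 hx

end Invariance

/-- Every densely ordered linear order with at least two elements satisfies the definable
pigeonhole principle: no definable bijection from a definable proper subset onto the set. -/
theorem dlo_php {Q : Type*} [LinearOrder Q] [DenselyOrdered Q] [Nontrivial Q] {n : ℕ}
    (D₁ D₂ : Set (Fin n → Q)) (h₁ : DLODefinable D₁) (h₂ : DLODefinable D₂)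
    (hss : D₁ ⊂ D₂) : ¬ DefBij D₁ D₂ := by
  classical
  rintro ⟨f, hbij, Ag, hAgfin, hAgdef⟩
  obtain ⟨A₁, hA₁fin, hA₁def⟩ := h₁
  obtain ⟨A₂, hA₂fin, hA₂def⟩ := h₂
  set B : Set Q := A₁ ∪ A₂ ∪ Ag ∪ {x | ∀ y, x ≤ y} ∪ {x | ∀ y, y ≤ x} with hB
  have hbotsub : ({x : Q | ∀ y, x ≤ y}).Subsingleton := fun a ha b hb =>
    le_antisymm (ha b) (hb a)
  have htopsub : ({x : Q | ∀ y, y ≤ x}).Subsingleton := fun a ha b hb =>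
    le_antisymm (hb a) (ha b)
  have hBfin : B.Finite :=
    ((((hA₁fin.union hA₂fin).union hAgfin).union hbotsub.finite).union htopsub.finite)
  have hbot : ∀ x : Q, (∀ y, x ≤ y) → x ∈ B := by
    intro x hx; simp only [hB, Set.mem_union, Set.mem_setOf_eq]; tauto
  have htop : ∀ x : Q, (∀ y, y ≤ x) → x ∈ B := by
    intro x hx; simp only [hB, Set.mem_union, Set.mem_setOf_eq]; tauto
  have hD₁ : B.Definable Language.order D₁ := by
    apply hA₁def.mono; intro a ha; simp only [hB, Set.mem_union]; tauto
  have hD₂ : B.Definable Language.order D₂ := by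
    apply hA₂def.mono; intro a ha; simp only [hB, Set.mem_union]; tauto
  have hG : B.Definable Language.order (graphOn D₁ f) := by
    apply hAgdef.mono; intro a ha; simp only [hB, Set.mem_union]; tauto
  haveI : Finite (↥B) := hBfin.to_subtype
  -- the finitary invariant recording the quantifier-free type over `B`
  let I := (Fin n → Fin n → Bool) × (Fin n → ↥B → Bool × Bool)
  haveI : Finite I := by infer_instance
  let inv : (Fin n → Q) → I := fun x =>
    (fun i j => decide (x i ≤ x j), fun i b => (decide (x i ≤ (b : Q)), decide ((b : Q) ≤ x i)))
  have inv_eq_iff : ∀ x y : Fin n → Q, inv x = inv y ↔ Equ B x y := by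
    intro x y
    constructor
    · intro he
      have h1 := congrArg Prod.fst he
      have h2 := congrArg Prod.snd he
      simp only [inv] at h1 h2
      constructor
      · intro i j
        have := congrFun (congrFun h1 i) j
        simpa only [decide_eq_decide] using this
      · intro b hb i
        have := congrFun (congrFun h2 i) ⟨b, hb⟩
        rw [Prod.ext_iff] at this
        exact ⟨by simpa only [decide_eq_decide] using this.1,
          by simpa only [decide_eq_decide] using this.2⟩
    · intro he
      refine Prod.ext ?_ ?_
      · funext i j
        simp only [inv, decide_eq_decide]
        exact he.1 i j
      · funext i b
        refine Prod.ext ?_ ?_ <;> simp only [inv, decide_eq_decide]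
        · exact (he.2 b b.2 i).1
        · exact (he.2 b b.2 i).2
  -- invariance of membership
  have memD₁ : ∀ {x y : Fin n → Q}, Equ B x y → x ∈ D₁ → y ∈ D₁ := fun hxy hx =>
    definable_invariant hBfin hbot htop hD₁ hxy hx
  have memG : ∀ {z z' : Fin (n + n) → Q}, Equ B z z' → z ∈ graphOn D₁ f →
      z' ∈ graphOn D₁ f := fun hz hzm =>
    definable_invariant hBfin hbot htop hG hz hzm
  -- translating between `Fin.append` and `Sum.elim`
  have natAdd_eq : ∀ j : Fin n, Fin.natAdd n j = j.addNat n := fun j =>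
    Fin.ext (by simp [Nat.add_comm])
  have append_eq : ∀ a b : Fin n → Q,
      Fin.append a b = Sum.elim a b ∘ (finSumFinEquiv (m := n) (n := n)).symm := by
    intro a b
    funext i
    induction i using Fin.addCases with
    | left j => simp
    | right j =>
      simp only [Function.comp_apply, finSumFinEquiv_symm_apply_natAdd, Fin.append_right,
        Sum.elim_inr]
  have append_fst : ∀ a b : Fin n → Q, Fin.append a b ∘ (Fin.castAdd n) = a := by
    intro a b
    funext i
    exact Fin.append_left a b i
  have append_snd : ∀ a b : Fin n → Q, Fin.append a b ∘ (Fin.natAdd n) = b := by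
    intro a b
    funext i
    exact Fin.append_right a b i
  -- the forward step : f preserves the invariant
  have stepF : ∀ x ∈ D₁, ∀ x' ∈ D₁, Equ B x x' → Equ B (f x) (f x') := by
    intro x hx x' hx' hxx
    obtain ⟨v, hv⟩ := hxx.extend_fin hBfin hbot htop (f x)
    have hv' : Equ B (Fin.append x (f x)) (Fin.append x' v) := by
      rw [append_eq, append_eq]
      exact hv.comp _
    have hgm : Fin.append x' v ∈ graphOn D₁ f := memG hv' ⟨x, hx, rfl⟩
    obtain ⟨x'', hx'', heq⟩ := hgm
    have hx'eq : x'' = x' := by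
      funext i
      have := congrFun heq (Fin.castAdd n i)
      rw [Fin.append_left, Fin.append_left] at this
      exact this.symm
    subst hx'eq
    have hveq : v = f x'' := by
      funext i
      have := congrFun heq (Fin.natAdd n i)
      rw [Fin.append_right, Fin.append_right] at this
      exact this
    rw [hveq] at hv'
    have h2 := hv'.comp (Fin.natAdd n)
    rwa [append_snd, append_snd] at h2
  -- the backward step : f reflects the invariant
  have stepB : ∀ x ∈ D₁, ∀ x' ∈ D₁, Equ B (f x) (f x') → Equ B x x' := by
    intro x hx x' hx' hff
    obtain ⟨v, hv⟩ := hff.extend_fin hBfin hbot htop x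
    have hv' : Equ B (Fin.append x (f x)) (Fin.append v (f x')) := by
      have h2 := hv.comp (fun i : Fin (n + n) =>
        Sum.swap ((finSumFinEquiv (m := n) (n := n)).symm i))
      have e1 : (Sum.elim (f x) x) ∘ (fun i : Fin (n + n) =>
          Sum.swap ((finSumFinEquiv (m := n) (n := n)).symm i)) = Fin.append x (f x) := by
        funext i
        induction i using Fin.addCases with
        | left j =>
          simp only [Function.comp_apply, finSumFinEquiv_symm_apply_castAdd, Sum.swap_inl, Sum.elim_inr,
            Fin.append_left]
        | right j =>
          simp only [Function.comp_apply, finSumFinEquiv_symm_apply_natAdd, Sum.swap_inr, Sum.elim_inl,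
            Fin.append_right]
      have e2 : (Sum.elim (f x') v) ∘ (fun i : Fin (n + n) =>
          Sum.swap ((finSumFinEquiv (m := n) (n := n)).symm i)) = Fin.append v (f x') := by
        funext i
        induction i using Fin.addCases with
        | left j =>
          simp only [Function.comp_apply, finSumFinEquiv_symm_apply_castAdd, Sum.swap_inl, Sum.elim_inr,
            Fin.append_left]
        | right j =>
          simp only [Function.comp_apply, finSumFinEquiv_symm_apply_natAdd, Sum.swap_inr, Sum.elim_inl,
            Fin.append_right]
      rw [e1, e2] at h2
      exact h2
    have hgm : Fin.append v (f x') ∈ graphOn D₁ f := memG hv' ⟨x, hx, rfl⟩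
    obtain ⟨x'', hx'', heq⟩ := hgm
    have hveq : v = x'' := by
      funext i
      have := congrFun heq (Fin.castAdd n i)
      rw [Fin.append_left, Fin.append_left] at this
      exact this
    have hfeq : f x'' = f x' := by
      funext i
      have := congrFun heq (Fin.natAdd n i)
      rw [Fin.append_right, Fin.append_right] at this
      exact this.symm
    have hx''x' : x'' = x' := hbij.injOn hx'' hx' hfeq
    rw [hveq, hx''x'] at hv'
    have h2 := hv'.comp (Fin.castAdd n)
    rwa [append_fst, append_fst] at h2
  -- counting the finitely many invariant values
  let S₁ : Set I := inv '' D₁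
  let S₂ : Set I := inv '' D₂
  have hS₁₂ : S₁ ⊆ S₂ := Set.image_mono hss.1
  obtain ⟨b, hbD₂, hbD₁⟩ := Set.exists_of_ssubset hss
  have hbS₂ : inv b ∈ S₂ := ⟨b, hbD₂, rfl⟩
  have hbS₁ : inv b ∉ S₁ := by
    rintro ⟨x, hx, hxe⟩
    exact hbD₁ (memD₁ ((inv_eq_iff _ _).1 hxe) hx)
  let Φ : I → I := fun c => if hc : ∃ x ∈ D₁, inv x = c then inv (f hc.choose) else c
  have hΦspec : ∀ x ∈ D₁, Φ (inv x) = inv (f x) := by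
    intro x hx
    have hc : ∃ y ∈ D₁, inv y = inv x := ⟨x, hx, rfl⟩
    have h0 : Φ (inv x) = inv (f hc.choose) := dif_pos hc
    rw [h0]
    obtain ⟨hy, hye⟩ := hc.choose_spec
    exact (inv_eq_iff _ _).2 (stepF _ hy _ hx ((inv_eq_iff _ _).1 hye))
  have hinj : Set.InjOn Φ S₁ := by
    rintro c ⟨x, hx, rfl⟩ c' ⟨x', hx', rfl⟩ he
    rw [hΦspec x hx, hΦspec x' hx'] at he
    exact (inv_eq_iff _ _).2 (stepB _ hx _ hx' ((inv_eq_iff _ _).1 he))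
  have himg : Φ '' S₁ = S₂ := by
    apply Set.Subset.antisymm
    · rintro _ ⟨_, ⟨x, hx, rfl⟩, rfl⟩
      rw [hΦspec x hx]
      exact ⟨f x, hbij.mapsTo hx, rfl⟩
    · rintro c ⟨y, hy, rfl⟩
      obtain ⟨x, hx, rfl⟩ := hbij.surjOn hy
      exact ⟨inv x, ⟨x, hx, rfl⟩, hΦspec x hx⟩
  have hfin₂ : S₂.Finite := Set.toFinite _
  have hcard : S₁.ncard = S₂.ncard := by
    rw [← himg, Set.ncard_image_of_injOn hinj]
  have hneq : S₁ ≠ S₂ := fun he => hbS₁ (he ▸ hbS₂)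
  have hlt : S₁.ncard < S₂.ncard :=
    Set.ncard_lt_ncard (hS₁₂.ssubset_of_ne hneq) hfin₂
  omega
end

section
/- Let Q be a nonempty dense linear order without endpoints. If A, B, C ⊆ Q^n are pairwise disjoint definable sets and there is a definable bijection from A ∪ C onto B ∪ C, then there is a definable bijection from A onto B. (The Grothendieck semiring of Q is cancellative.) -/
open FirstOrder FirstOrder.Language

attribute [local instance] FirstOrder.Language.orderStructure

set_option linter.unusedSectionVars false


namespace DLOCancel
variable {Q : Type*} [LinearOrder Q] [DenselyOrdered Q] [NoMinOrder Q] [NoMaxOrder Q] [Nonempty Q]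

/-- order-equivalence over a parameter set `A` -/
def OE (A : Set Q) {γ : Type*} (v w : γ → Q) : Prop :=
  (∀ i j, v i ≤ v j ↔ w i ≤ w j) ∧ ∀ i, ∀ a ∈ A, (v i ≤ a ↔ w i ≤ a) ∧ (a ≤ v i ↔ a ≤ w i)

theorem exists_perturb {E : Set Q} (hE : E.Finite) {q : Q} (hq : q ∉ E) :
    ∃ q', q' ≠ q ∧ ∀ e ∈ E, (e ≤ q ↔ e ≤ q') ∧ (q ≤ e ↔ q' ≤ e) := by
  classical
  have hlohi : ∀ x ∈ hE.toFinset.filter (· < q), ∀ y ∈ insert q (hE.toFinset.filter (q < ·)),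
      x < y := by
    intro x hx y hy
    simp only [Finset.mem_filter, Set.Finite.mem_toFinset] at hx
    rcases Finset.mem_insert.1 hy with rfl | hy
    · exact hx.2
    · simp only [Finset.mem_filter, Set.Finite.mem_toFinset] at hy
      exact hx.2.trans hy.2
  obtain ⟨m, hm1, hm2⟩ := Order.exists_between_finsets (hE.toFinset.filter (· < q))
    (insert q (hE.toFinset.filter (q < ·))) hlohi
  refine ⟨m, ne_of_lt (hm2 q (Finset.mem_insert_self _ _)), fun e he => ?_⟩
  have heq : e ≠ q := fun h => hq (h ▸ he)
  rcases lt_or_gt_of_ne heq with h | h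
  · have := hm1 e (by simp [Set.Finite.mem_toFinset, he, h])
    constructor
    · exact ⟨fun _ => this.le, fun _ => h.le⟩
    · exact ⟨fun h2 => absurd h2 (not_le.2 h), fun h2 => absurd h2 (not_le.2 this)⟩
  · have := hm2 e (Finset.mem_insert_of_mem (by simp [Set.Finite.mem_toFinset, he, h]))
    constructor
    · exact ⟨fun h2 => absurd h2 (not_le.2 h), fun h2 => absurd h2 (not_le.2 this)⟩
    · exact ⟨fun _ => this.le, fun _ => h.le⟩


theorem extend_point {A : Set Q} (hA : A.Finite) {β : Type*} [Fintype β] {w w' : β → Q}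
    (h1 : ∀ i j, w i ≤ w j ↔ w' i ≤ w' j)
    (h2 : ∀ i, ∀ a ∈ A, (w i ≤ a ↔ w' i ≤ a) ∧ (a ≤ w i ↔ a ≤ w' i)) (x : Q) :
    ∃ y : Q, (∀ i, (w i ≤ x ↔ w' i ≤ y) ∧ (x ≤ w i ↔ y ≤ w' i)) ∧
      ∀ a ∈ A, (x ≤ a ↔ y ≤ a) ∧ (a ≤ x ↔ a ≤ y) := by
  classical
  by_cases hx : ∃ i, w i = x
  · obtain ⟨i, rfl⟩ := hx
    refine ⟨w' i, fun j => ⟨h1 j i, h1 i j⟩, fun a ha => h2 i a ha⟩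
  by_cases hxA : x ∈ A
  · refine ⟨x, fun i => ⟨(h2 i x hxA).1, (h2 i x hxA).2⟩, fun a _ => ⟨Iff.rfl, Iff.rfl⟩⟩
  push_neg at hx
  set lo : Finset Q := (Finset.univ.filter (fun i => w i < x)).image w' ∪
    hA.toFinset.filter (· < x) with hlo
  set hi : Finset Q := (Finset.univ.filter (fun i => x < w i)).image w' ∪
    hA.toFinset.filter (x < ·) with hhi
  have memlo : ∀ z, z ∈ lo ↔ (∃ i, w i < x ∧ w' i = z) ∨ (z ∈ A ∧ z < x) := by
    intro z
    simp [hlo, Set.Finite.mem_toFinset, and_comm]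
  have memhi : ∀ z, z ∈ hi ↔ (∃ i, x < w i ∧ w' i = z) ∨ (z ∈ A ∧ x < z) := by
    intro z
    simp [hhi, Set.Finite.mem_toFinset, and_comm]
  have hlohi : ∀ u ∈ lo, ∀ v ∈ hi, u < v := by
    intro u hu v hv
    rcases (memlo u).1 hu with ⟨i, hi1, rfl⟩ | ⟨huA, hux⟩ <;>
      rcases (memhi v).1 hv with ⟨j, hj1, rfl⟩ | ⟨hvA, hxv⟩
    · have hij : w i < w j := hi1.trans hj1
      exact lt_of_le_not_ge ((h1 i j).1 hij.le) (fun hc => absurd ((h1 j i).2 hc) (not_le.2 hij))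
    · have : w i < v := hi1.trans hxv
      exact lt_of_le_not_ge ((h2 i v hvA).1.1 this.le)
        (fun hc => absurd ((h2 i v hvA).2.2 hc) (not_le.2 this))
    · have : u < w j := hux.trans hj1
      exact lt_of_le_not_ge ((h2 j u huA).2.1 this.le)
        (fun hc => absurd ((h2 j u huA).1.2 hc) (not_le.2 this))
    · exact hux.trans hxv
  obtain ⟨y, hy1, hy2⟩ := Order.exists_between_finsets lo hi hlohi
  refine ⟨y, fun i => ?_, fun a ha => ?_⟩
  · rcases lt_trichotomy (w i) x with h | h | h
    · have : w' i < y := hy1 _ ((memlo _).2 (Or.inl ⟨i, h, rfl⟩))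
      exact ⟨⟨fun _ => this.le, fun _ => h.le⟩,
        ⟨fun h2 => absurd h2 (not_le.2 h), fun h2 => absurd h2 (not_le.2 this)⟩⟩
    · exact absurd h (hx i)
    · have : y < w' i := hy2 _ ((memhi _).2 (Or.inl ⟨i, h, rfl⟩))
      exact ⟨⟨fun h2 => absurd h2 (not_le.2 h), fun h2 => absurd h2 (not_le.2 this)⟩,
        ⟨fun _ => this.le, fun _ => h.le⟩⟩
  · rcases lt_trichotomy x a with h | h | h
    · have : y < a := hy2 _ ((memhi _).2 (Or.inr ⟨ha, h⟩))
      exact ⟨⟨fun _ => this.le, fun _ => h.le⟩,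
        ⟨fun h2 => absurd h2 (not_le.2 h), fun h2 => absurd h2 (not_le.2 this)⟩⟩
    · exact absurd (h ▸ ha) hxA
    · have : a < y := hy1 _ ((memlo _).2 (Or.inr ⟨ha, h⟩))
      exact ⟨⟨fun h2 => absurd h2 (not_le.2 h), fun h2 => absurd h2 (not_le.2 this)⟩,
        ⟨fun _ => this.le, fun _ => h.le⟩⟩


theorem term_classify {A : Set Q} {γ : Type*} (t : (Language.order[[A]]).Term γ)
    (v w : γ → Q) :
    (∃ i, t.realize v = v i ∧ t.realize w = w i) ∨
      ∃ a ∈ A, t.realize v = a ∧ t.realize w = a := by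
  induction t with
  | var i => exact Or.inl ⟨i, rfl, rfl⟩
  | @func l f ts ih =>
    cases f with
    | inl f => exact isEmptyElim f
    | inr c =>
      cases l with
      | zero =>
        right
        exact ⟨c, c.2, rfl, rfl⟩
      | succ l => exact isEmptyElim c

theorem realize_iff_of_OE {A : Set Q} (hA : A.Finite) {α : Type*} [Fintype α] :
    ∀ {l : ℕ} (φ : (Language.order[[A]]).BoundedFormula α l) (u : α → Q) (xs : Fin l → Q)
      (v : α → Q) (ys : Fin l → Q),
      (∀ i j, Sum.elim u xs i ≤ Sum.elim u xs j ↔ Sum.elim v ys i ≤ Sum.elim v ys j) →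
      (∀ i, ∀ a ∈ A, (Sum.elim u xs i ≤ a ↔ Sum.elim v ys i ≤ a) ∧
        (a ≤ Sum.elim u xs i ↔ a ≤ Sum.elim v ys i)) →
      (φ.Realize u xs ↔ φ.Realize v ys) := by
  intro l φ
  induction φ with
  | falsum => exact fun _ _ _ _ _ _ => Iff.rfl
  | @equal l t₁ t₂ =>
    intro u xs v ys h1 h2
    have cmp : ∀ t s : (Language.order[[A]]).Term (α ⊕ Fin l),
        t.realize (Sum.elim u xs) ≤ s.realize (Sum.elim u xs) ↔
        t.realize (Sum.elim v ys) ≤ s.realize (Sum.elim v ys) := by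
      intro t s
      rcases term_classify t (Sum.elim u xs) (Sum.elim v ys) with ⟨i, hi1, hi2⟩ | ⟨a, ha, ha1, ha2⟩ <;>
        rcases term_classify s (Sum.elim u xs) (Sum.elim v ys) with ⟨j, hj1, hj2⟩ | ⟨b, hb, hb1, hb2⟩
      · rw [hi1, hi2, hj1, hj2]; exact h1 i j
      · rw [hi1, hi2, hb1, hb2]; exact (h2 i b hb).1
      · rw [ha1, ha2, hj1, hj2]; exact (h2 j a ha).2
      · rw [ha1, ha2, hb1, hb2]
    show t₁.realize (Sum.elim u xs) = t₂.realize (Sum.elim u xs) ↔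
      t₁.realize (Sum.elim v ys) = t₂.realize (Sum.elim v ys)
    rw [le_antisymm_iff, le_antisymm_iff, cmp t₁ t₂, cmp t₂ t₁]
  | @rel l k R ts =>
    intro u xs v ys h1 h2
    have cmp : ∀ t s : (Language.order[[A]]).Term (α ⊕ Fin l),
        t.realize (Sum.elim u xs) ≤ s.realize (Sum.elim u xs) ↔
        t.realize (Sum.elim v ys) ≤ s.realize (Sum.elim v ys) := by
      intro t s
      rcases term_classify t (Sum.elim u xs) (Sum.elim v ys) with ⟨i, hi1, hi2⟩ | ⟨a, ha, ha1, ha2⟩ <;>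
        rcases term_classify s (Sum.elim u xs) (Sum.elim v ys) with ⟨j, hj1, hj2⟩ | ⟨b, hb, hb1, hb2⟩
      · rw [hi1, hi2, hj1, hj2]; exact h1 i j
      · rw [hi1, hi2, hb1, hb2]; exact (h2 i b hb).1
      · rw [ha1, ha2, hj1, hj2]; exact (h2 j a ha).2
      · rw [ha1, ha2, hb1, hb2]
    cases R with
    | inl R =>
      cases R
      exact cmp (ts 0) (ts 1)
    | inr R => exact isEmptyElim R
  | @imp l f g ihf ihg =>
    intro u xs v ys h1 h2
    exact imp_congr (ihf u xs v ys h1 h2) (ihg u xs v ys h1 h2)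
  | @all l f ih =>
    intro u xs v ys h1 h2
    have idx : ∀ j : α ⊕ Fin (l + 1), (∃ i : α ⊕ Fin l, ∀ (g : α → Q) (zs : Fin l → Q) (z : Q),
        Sum.elim g (Fin.snoc zs z) j = Sum.elim g zs i) ∨
        (∀ (g : α → Q) (zs : Fin l → Q) (z : Q), Sum.elim g (Fin.snoc zs z) j = z) := by
      rintro (a | k)
      · exact Or.inl ⟨Sum.inl a, fun _ _ _ => rfl⟩
      · refine Fin.lastCases ?_ (fun i => ?_) k
        · exact Or.inr (fun _ _ _ => by simp)
        · exact Or.inl ⟨Sum.inr i, fun _ _ _ => by simp⟩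
    have main : ∀ (u' : α → Q) (xs' : Fin l → Q) (v' : α → Q) (ys' : Fin l → Q),
        (∀ i j, Sum.elim u' xs' i ≤ Sum.elim u' xs' j ↔ Sum.elim v' ys' i ≤ Sum.elim v' ys' j) →
        (∀ i, ∀ a ∈ A, (Sum.elim u' xs' i ≤ a ↔ Sum.elim v' ys' i ≤ a) ∧
          (a ≤ Sum.elim u' xs' i ↔ a ≤ Sum.elim v' ys' i)) →
        (∀ x, f.Realize u' (Fin.snoc xs' x)) → ∀ y, f.Realize v' (Fin.snoc ys' y) := by
      intro u' xs' v' ys' h1' h2' hall y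
      obtain ⟨x, hy1, hy2⟩ := extend_point hA (fun i j => (h1' i j).symm)
        (fun i a ha => ⟨((h2' i a ha).1).symm, ((h2' i a ha).2).symm⟩) y
      have e1 : ∀ i j, Sum.elim u' (Fin.snoc xs' x) i ≤ Sum.elim u' (Fin.snoc xs' x) j ↔
          Sum.elim v' (Fin.snoc ys' y) i ≤ Sum.elim v' (Fin.snoc ys' y) j := by
        intro i j
        rcases idx i with ⟨i0, hi0⟩ | hi0 <;> rcases idx j with ⟨j0, hj0⟩ | hj0
        · rw [hi0, hi0, hj0, hj0]; exact h1' i0 j0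
        · rw [hi0, hi0, hj0, hj0]; exact ((hy1 i0).1).symm
        · rw [hi0, hi0, hj0, hj0]; exact ((hy1 j0).2).symm
        · rw [hi0, hi0, hj0, hj0]; exact iff_of_true le_rfl le_rfl
      have e2 : ∀ i, ∀ a ∈ A, (Sum.elim u' (Fin.snoc xs' x) i ≤ a ↔
          Sum.elim v' (Fin.snoc ys' y) i ≤ a) ∧
          (a ≤ Sum.elim u' (Fin.snoc xs' x) i ↔ a ≤ Sum.elim v' (Fin.snoc ys' y) i) := by
        intro i a ha
        rcases idx i with ⟨i0, hi0⟩ | hi0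
        · rw [hi0, hi0]; exact h2' i0 a ha
        · rw [hi0, hi0]; exact ⟨((hy2 a ha).1).symm, ((hy2 a ha).2).symm⟩
      exact (ih u' (Fin.snoc xs' x) v' (Fin.snoc ys' y) e1 e2).1 (hall x)
    rw [BoundedFormula.realize_all, BoundedFormula.realize_all]
    constructor
    · exact main u xs v ys h1 h2
    · exact main v ys u xs (fun i j => (h1 i j).symm)
        (fun i a ha => ⟨((h2 i a ha).1).symm, ((h2 i a ha).2).symm⟩)

theorem mem_of_OE {A : Set Q} (hA : A.Finite) {α : Type*} [Fintype α] {s : Set (α → Q)}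
    (hs : A.Definable Language.order s) {v w : α → Q}
    (h1 : ∀ i j, v i ≤ v j ↔ w i ≤ w j)
    (h2 : ∀ i, ∀ a ∈ A, (v i ≤ a ↔ w i ≤ a) ∧ (a ≤ v i ↔ a ≤ w i)) (hv : v ∈ s) : w ∈ s := by
  obtain ⟨φ, rfl⟩ := hs
  have h1' : ∀ i j : α ⊕ Fin 0, Sum.elim v default i ≤ Sum.elim v default j ↔
      Sum.elim w default i ≤ Sum.elim w default j := by
    rintro (i | i) (j | j)
    · exact h1 i j
    · exact j.elim0
    · exact i.elim0
    · exact i.elim0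
  have h2' : ∀ i : α ⊕ Fin 0, ∀ a ∈ A, (Sum.elim v default i ≤ a ↔ Sum.elim w default i ≤ a) ∧
      (a ≤ Sum.elim v default i ↔ a ≤ Sum.elim w default i) := by
    rintro (i | i)
    · exact h2 i
    · exact i.elim0
  exact (realize_iff_of_OE hA φ v default w default h1' h2').1 hv

theorem replace_mem {A : Set Q} (hA : A.Finite) {α : Type*} [Fintype α] {s : Set (α → Q)}
    (hs : A.Definable Language.order s) {z : α → Q} (hz : z ∈ s) {q q' : Q} (hq : q ∉ A)
    (hE : ∀ e, e ∈ A ∪ Set.range z → e ≠ q → (e ≤ q ↔ e ≤ q') ∧ (q ≤ e ↔ q' ≤ e)) :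
    (fun i => if z i = q then q' else z i) ∈ s := by
  classical
  refine mem_of_OE hA hs ?_ ?_ hz
  · intro i j
    by_cases hi : z i = q <;> by_cases hj : z j = q
    · simp only [if_pos hi, if_pos hj, hi, hj]
      exact iff_of_true le_rfl le_rfl
    · simp only [if_pos hi, if_neg hj, hi]
      exact (hE (z j) (Or.inr ⟨j, rfl⟩) hj).2
    · simp only [if_neg hi, if_pos hj, hj]
      exact (hE (z i) (Or.inr ⟨i, rfl⟩) hi).1
    · simp only [if_neg hi, if_neg hj]
  · intro i a ha
    have haq : a ≠ q := fun h => hq (h ▸ ha)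
    by_cases hi : z i = q
    · simp only [if_pos hi, hi]
      exact ⟨(hE a (Or.inl ha) haq).2, (hE a (Or.inl ha) haq).1⟩
    · simp [hi]

theorem append_eq_iff {n m : ℕ} {x x' : Fin n → Q} {y y' : Fin m → Q} :
    Fin.append x y = Fin.append x' y' ↔ x = x' ∧ y = y' := by
  constructor
  · intro h
    constructor
    · funext i
      have := congrFun h (Fin.castAdd m i)
      simpa using this
    · funext i
      have := congrFun h (Fin.natAdd n i)
      simpa using this
  · rintro ⟨rfl, rfl⟩; rfl

theorem mem_graphOn {n m : ℕ} {D : Set (Fin n → Q)} {f : (Fin n → Q) → (Fin m → Q)}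
    {x : Fin n → Q} {y : Fin m → Q} :
    Fin.append x y ∈ graphOn D f ↔ x ∈ D ∧ y = f x := by
  constructor
  · rintro ⟨x', hx', h⟩
    obtain ⟨rfl, rfl⟩ := append_eq_iff.1 h
    exact ⟨hx', rfl⟩
  · rintro ⟨hx, rfl⟩
    exact ⟨x, hx, rfl⟩

theorem forward_coord {n : ℕ} {P : Set Q} (hP : P.Finite) {D : Set (Fin n → Q)}
    {f : (Fin n → Q) → (Fin n → Q)} (hg : P.Definable Language.order (graphOn D f))
    {x : Fin n → Q} (hx : x ∈ D) (j : Fin n) : f x j ∈ Set.range x ∪ P := by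
  classical
  by_contra hq
  set q := f x j with hqdef
  set z := Fin.append x (f x) with hzdef
  have hqP : q ∉ P := fun h => hq (Or.inr h)
  have hqx : q ∉ Set.range x := fun h => hq (Or.inl h)
  have hEfin : ((P ∪ Set.range z) \ {q}).Finite :=
    (hP.union (Set.finite_range z)).sdiff
  obtain ⟨q', hq'ne, hq'⟩ := exists_perturb hEfin (fun h => h.2 rfl)
  have hz : z ∈ graphOn D f := ⟨x, hx, rfl⟩
  have hmem := replace_mem hP hg hz hqP
    (fun e he hne => hq' e ⟨he, by simpa using hne⟩)
  have hrw : (fun i => if z i = q then q' else z i) =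
      Fin.append x (fun i => if f x i = q then q' else f x i) := by
    funext i
    refine Fin.addCases (fun i => ?_) (fun i => ?_) i
    · rw [Fin.append_left]
      have : z (Fin.castAdd n i) = x i := Fin.append_left x (f x) i
      rw [this, if_neg (fun h => hqx ⟨i, h⟩)]
    · rw [Fin.append_right]
      have : z (Fin.natAdd n i) = f x i := Fin.append_right x (f x) i
      rw [this]
  rw [hrw] at hmem
  obtain ⟨-, hfeq⟩ := mem_graphOn.1 hmem
  have := congrFun hfeq j
  rw [if_pos rfl] at this
  exact hq'ne (this.trans hqdef.symm)

theorem backward_coord {n : ℕ} {P : Set Q} (hP : P.Finite) {D : Set (Fin n → Q)}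
    {f : (Fin n → Q) → (Fin n → Q)} (hg : P.Definable Language.order (graphOn D f))
    (hinj : Set.InjOn f D) {x : Fin n → Q} (hx : x ∈ D) (j : Fin n) :
    x j ∈ Set.range (f x) ∪ P := by
  classical
  by_contra hq
  set q := x j with hqdef
  set z := Fin.append x (f x) with hzdef
  have hqP : q ∉ P := fun h => hq (Or.inr h)
  have hqfx : q ∉ Set.range (f x) := fun h => hq (Or.inl h)
  have hEfin : ((P ∪ Set.range z) \ {q}).Finite := (hP.union (Set.finite_range z)).sdiff
  obtain ⟨q', hq'ne, hq'⟩ := exists_perturb hEfin (fun h => h.2 rfl)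
  have hz : z ∈ graphOn D f := ⟨x, hx, rfl⟩
  have hmem := replace_mem hP hg hz hqP
    (fun e he hne => hq' e ⟨he, by simpa using hne⟩)
  have hrw : (fun i => if z i = q then q' else z i) =
      Fin.append (fun i => if x i = q then q' else x i) (f x) := by
    funext i
    refine Fin.addCases (fun i => ?_) (fun i => ?_) i
    · rw [Fin.append_left]
      have : z (Fin.castAdd n i) = x i := Fin.append_left x (f x) i
      rw [this]
    · rw [Fin.append_right]
      have : z (Fin.natAdd n i) = f x i := Fin.append_right x (f x) i
      rw [this, if_neg (fun h => hqfx ⟨i, h⟩)]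
  rw [hrw] at hmem
  obtain ⟨hx', hfeq⟩ := mem_graphOn.1 hmem
  have hxx : (fun i => if x i = q then q' else x i) = x := hinj hx' hx hfeq.symm
  have := congrFun hxx j
  rw [if_pos rfl] at this
  exact hq'ne this

section Orbits

variable {n : ℕ} {P : Set Q} {A B C : Set (Fin n → Q)} {f : (Fin n → Q) → (Fin n → Q)}

theorem iter_coords (hfc : ∀ x ∈ A ∪ C, ∀ j, f x j ∈ Set.range x ∪ P) :
    ∀ (k : ℕ) (x : Fin n → Q), (∀ i, i < k → f^[i] x ∈ A ∪ C) →
      ∀ j, f^[k] x j ∈ Set.range x ∪ P := by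
  intro k
  induction k with
  | zero => exact fun x _ j => Or.inl ⟨j, rfl⟩
  | succ k ih =>
    intro x hD j
    rw [Function.iterate_succ_apply']
    rcases hfc _ (hD k (Nat.lt_succ_self k)) j with ⟨i, hi⟩ | hp
    · rw [← hi]
      exact ih x (fun i hik => hD i (hik.trans (Nat.lt_succ_self k))) i
    · exact Or.inr hp

theorem card_bound (hP : P.Finite) (b : Fin n → Q) (K : ℕ) (w : Fin K → (Fin n → Q))
    (hw : ∀ t j, w t j ∈ Set.range b ∪ P) (hinj : Function.Injective w) :
    K ≤ (n + hP.toFinset.card) ^ n := by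
  classical
  set S : Finset Q := Finset.univ.image b ∪ hP.toFinset with hS
  have hmem : ∀ t j, w t j ∈ S := by
    intro t j
    rcases hw t j with ⟨i, hi⟩ | hp
    · exact Finset.mem_union_left _ (Finset.mem_image.2 ⟨i, Finset.mem_univ i, hi⟩)
    · exact Finset.mem_union_right _ (hP.mem_toFinset.2 hp)
  let W : Fin K → (Fin n → ↥S) := fun t j => ⟨w t j, hmem t j⟩
  have hWinj : Function.Injective W := by
    intro t t' h
    apply hinj
    funext j
    exact congrArg Subtype.val (congrFun h j)
  have h1 : K ≤ Fintype.card (Fin n → ↥S) := by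
    simpa using Fintype.card_le_of_injective W hWinj
  have h2 : Fintype.card (Fin n → ↥S) = S.card ^ n := by
    simp [Fintype.card_fun]
  have h3 : S.card ≤ n + hP.toFinset.card := by
    have hc1 : S.card ≤ (Finset.univ.image b).card + hP.toFinset.card := Finset.card_union_le _ _
    have hc2 : (Finset.univ.image b).card ≤ n := by
      have := Finset.card_image_le (s := (Finset.univ : Finset (Fin n))) (f := b)
      simpa using this
    exact hc1.trans (Nat.add_le_add_right hc2 _)
  exact h1.trans (h2 ▸ Nat.pow_le_pow_left h3 n)

theorem iterate_cancel (hinj : Set.InjOn f (A ∪ C)) :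
    ∀ (k : ℕ) (x y : Fin n → Q), (∀ i, i < k → f^[i] x ∈ A ∪ C) →
      (∀ i, i < k → f^[i] y ∈ A ∪ C) → f^[k] x = f^[k] y → x = y := by
  intro k
  induction k with
  | zero => exact fun x y _ _ h => h
  | succ k ih =>
    intro x y hx hy h
    rw [Function.iterate_succ_apply', Function.iterate_succ_apply'] at h
    exact ih x y (fun i hi => hx i (hi.trans (Nat.lt_succ_self k)))
      (fun i hi => hy i (hi.trans (Nat.lt_succ_self k)))
      (hinj (hx k (Nat.lt_succ_self k)) (hy k (Nat.lt_succ_self k)) h)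

theorem mem_D_of_le (hAB : Disjoint A B) (hAC : Disjoint A C) (hBC : Disjoint B C)
    {x : Fin n → Q} (hxA : x ∈ A) {K : ℕ} (hC : ∀ i, 1 ≤ i → i ≤ K → f^[i] x ∈ C) :
    ∀ i, i ≤ K → f^[i] x ∈ A ∪ C := by
  intro i hi
  rcases Nat.eq_zero_or_pos i with rfl | hpos
  · exact Or.inl hxA
  · exact Or.inr (hC i hpos hi)

theorem forward_distinct (hbij : Set.BijOn f (A ∪ C) (B ∪ C))
    (hAB : Disjoint A B) (hAC : Disjoint A C) (hBC : Disjoint B C)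
    {x : Fin n → Q} (hxA : x ∈ A) {K : ℕ} (hC : ∀ i, 1 ≤ i → i ≤ K → f^[i] x ∈ C) :
    ∀ i j, i ≤ K → j ≤ K → i < j → f^[i] x ≠ f^[j] x := by
  have hmemD := mem_D_of_le hAB hAC hBC hxA hC
  intro i
  induction i with
  | zero =>
    intro j _ hjK hij h
    obtain ⟨j', rfl⟩ := Nat.exists_eq_succ_of_ne_zero (Nat.pos_iff_ne_zero.1 hij)
    have : f^[j' + 1] x ∈ B ∪ C := by
      rw [Function.iterate_succ_apply']
      exact hbij.mapsTo (hmemD j' (Nat.le_of_succ_le hjK))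
    rcases this with hB | hC'
    · exact Set.disjoint_left.1 hAB (h ▸ hxA) hB
    · exact Set.disjoint_left.1 hAC (h ▸ hxA) hC'
  | succ s ih =>
    intro j hsK hjK hij h
    obtain ⟨t, rfl⟩ := Nat.exists_eq_succ_of_ne_zero (Nat.pos_iff_ne_zero.1 (Nat.lt_of_le_of_lt (Nat.zero_le _) hij))
    rw [Function.iterate_succ_apply', Function.iterate_succ_apply'] at h
    have hs : f^[s] x ∈ A ∪ C := hmemD s (Nat.le_of_succ_le hsK)
    have ht : f^[t] x ∈ A ∪ C := hmemD t (Nat.le_of_succ_le hjK)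
    exact ih t (Nat.le_of_succ_le hsK) (Nat.le_of_succ_le hjK) (Nat.succ_lt_succ_iff.1 hij)
      (hbij.injOn hs ht h)

end Orbits

section Hit

variable {n : ℕ} {P : Set Q} {A B C : Set (Fin n → Q)} {f : (Fin n → Q) → (Fin n → Q)}

/-- `x` reaches `B` in exactly `k` steps, through `C`. -/
def Chain (B C : Set (Fin n → Q)) (f : (Fin n → Q) → (Fin n → Q)) (x : Fin n → Q) (k : ℕ) :
    Prop :=
  1 ≤ k ∧ f^[k] x ∈ B ∧ ∀ i, 1 ≤ i → i < k → f^[i] x ∈ C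

theorem chain_unique (hBC : Disjoint B C) {x : Fin n → Q} {k k' : ℕ}
    (hk : Chain B C f x k) (hk' : Chain B C f x k') : k = k' := by
  rcases lt_trichotomy k k' with h | h | h
  · exact absurd (hk'.2.2 k hk.1 h) (Set.disjoint_left.1 hBC hk.2.1)
  · exact h
  · exact absurd (hk.2.2 k' hk'.1 h) (Set.disjoint_left.1 hBC hk'.2.1)

theorem exists_hit (hP : P.Finite) (hbij : Set.BijOn f (A ∪ C) (B ∪ C))
    (hAB : Disjoint A B) (hAC : Disjoint A C) (hBC : Disjoint B C)
    (hfc : ∀ x ∈ A ∪ C, ∀ j, f x j ∈ Set.range x ∪ P)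
    {x : Fin n → Q} (hxA : x ∈ A) :
    ∃ k, k ≤ (n + hP.toFinset.card) ^ n ∧ Chain B C f x k := by
  classical
  set N := (n + hP.toFinset.card) ^ n with hN
  have hex : ∃ k, 1 ≤ k ∧ f^[k] x ∉ C := by
    by_contra hc
    push_neg at hc
    have hC : ∀ i, 1 ≤ i → i ≤ N → f^[i] x ∈ C := fun i h1 _ => hc i h1
    have hmemD := mem_D_of_le (f := f) hAB hAC hBC hxA hC
    have hco : ∀ (t : Fin (N + 1)) (j : Fin n), f^[(t : ℕ)] x j ∈ Set.range x ∪ P := by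
      intro t j
      exact iter_coords hfc t x (fun i hi => mem_D_of_le hAB hAC hBC hxA
        (fun i' h1 _ => hc i' h1) i (Nat.le_of_lt_succ (hi.trans t.isLt))) j
    have hinj : Function.Injective (fun t : Fin (N + 1) => f^[(t : ℕ)] x) := by
      intro t t' h
      by_contra hne
      have hne' : (t : ℕ) ≠ (t' : ℕ) := fun hh => hne (Fin.ext hh)
      rcases lt_or_gt_of_ne hne' with hlt | hlt
      · exact forward_distinct hbij hAB hAC hBC hxA (fun i h1 _ => hc i h1) t t'
          (Nat.le_of_lt_succ t.isLt) (Nat.le_of_lt_succ t'.isLt) hlt h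
      · exact forward_distinct hbij hAB hAC hBC hxA (fun i h1 _ => hc i h1) t' t
          (Nat.le_of_lt_succ t'.isLt) (Nat.le_of_lt_succ t.isLt) hlt h.symm
    have := card_bound hP x (N + 1) _ hco hinj
    omega
  obtain ⟨hk1, hkC⟩ := Nat.find_spec hex
  set k := Nat.find hex with hkdef
  have hinter : ∀ i, 1 ≤ i → i < k → f^[i] x ∈ C := by
    intro i h1 hik
    by_contra hc
    exact Nat.find_min hex hik ⟨h1, hc⟩
  have hD : ∀ i, i < k → f^[i] x ∈ A ∪ C := by
    intro i hi
    rcases Nat.eq_zero_or_pos i with rfl | hpos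
    · exact Or.inl hxA
    · exact Or.inr (hinter i hpos hi)
  have hkB : f^[k] x ∈ B := by
    have hmem : f^[k] x ∈ B ∪ C := by
      rw [← Nat.succ_pred_eq_of_pos hk1, Function.iterate_succ_apply']
      exact hbij.mapsTo (hD _ (Nat.pred_lt (Nat.pos_iff_ne_zero.1 hk1)))
    exact hmem.resolve_right hkC
  refine ⟨k, ?_, hk1, hkB, hinter⟩
  -- bound : k ≤ N
  have hco : ∀ (t : Fin (k + 1)) (j : Fin n), f^[(t : ℕ)] x j ∈ Set.range x ∪ P := by
    intro t j
    exact iter_coords hfc t x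
      (fun i hi => hD i (Nat.lt_of_lt_of_le hi (Nat.le_of_lt_succ t.isLt))) j
  have hinj : Function.Injective (fun t : Fin (k + 1) => f^[(t : ℕ)] x) := by
    have hdist : ∀ i j : ℕ, i ≤ k → j ≤ k → i < j → f^[i] x ≠ f^[j] x := by
      intro i j hik hjk hij h
      rcases Nat.lt_or_ge j k with hjk' | hjk'
      · exact forward_distinct hbij hAB hAC hBC hxA
          (fun i' h1 hik' => hinter i' h1 (Nat.lt_of_le_of_lt hik' hjk'))
          i j (Nat.le_of_lt hij) (le_refl j) hij h
      · have hjeq : j = k := Nat.le_antisymm hjk hjk'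
        subst hjeq
        rcases Nat.eq_zero_or_pos i with rfl | hpos
        · exact Set.disjoint_left.1 hAB (h ▸ hxA) hkB
        · exact Set.disjoint_left.1 hBC hkB (h ▸ hinter i hpos hij)
    intro t t' h
    by_contra hne
    have hne' : (t : ℕ) ≠ (t' : ℕ) := fun hh => hne (Fin.ext hh)
    rcases lt_or_gt_of_ne hne' with hlt | hlt
    · exact hdist t t' (Nat.le_of_lt_succ t.isLt) (Nat.le_of_lt_succ t'.isLt) hlt h
    · exact hdist t' t (Nat.le_of_lt_succ t'.isLt) (Nat.le_of_lt_succ t.isLt) hlt h.symm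
  have := card_bound hP x (k + 1) _ hco hinj
  omega

end Hit

section Gfun

variable {n : ℕ} {P : Set Q} {A B C : Set (Fin n → Q)} {f : (Fin n → Q) → (Fin n → Q)}

open Classical in
/-- The cancelling bijection: iterate `f` until landing in `B`. -/
noncomputable def gfun (B : Set (Fin n → Q)) (f : (Fin n → Q) → (Fin n → Q)) :
    (Fin n → Q) → (Fin n → Q) := fun x =>
  if h : ∃ k, 1 ≤ k ∧ f^[k] x ∈ B then f^[Nat.find h] x else x

theorem chain_of_minimal (hbij : Set.BijOn f (A ∪ C) (B ∪ C)) {x : Fin n → Q} (hxA : x ∈ A)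
    {m : ℕ} (hm : 1 ≤ m ∧ f^[m] x ∈ B) (hmin : ∀ i, i < m → ¬(1 ≤ i ∧ f^[i] x ∈ B)) :
    Chain B C f x m := by
  refine ⟨hm.1, hm.2, ?_⟩
  intro i
  induction i using Nat.strong_induction_on with
  | _ i ih =>
    intro h1i hilt
    have hprev : f^[i - 1] x ∈ A ∪ C := by
      rcases Nat.eq_zero_or_pos (i - 1) with hz | hpos
      · rw [hz]; exact Or.inl hxA
      · exact Or.inr (ih (i - 1) (Nat.pred_lt (Nat.pos_iff_ne_zero.1 h1i)) hpos
          (Nat.lt_of_le_of_lt (Nat.pred_le i) hilt))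
    have hBC' : f^[i] x ∈ B ∪ C := by
      rw [← Nat.succ_pred_eq_of_pos h1i, Function.iterate_succ_apply']
      exact hbij.mapsTo hprev
    exact hBC'.resolve_left (fun hB' => hmin i hilt ⟨h1i, hB'⟩)

theorem gfun_eq_of_chain (hbij : Set.BijOn f (A ∪ C) (B ∪ C)) (hBC : Disjoint B C)
    {x : Fin n → Q} (hxA : x ∈ A) {k : ℕ} (hk : Chain B C f x k) :
    gfun B f x = f^[k] x := by
  classical
  rw [gfun]
  split_ifs with h'
  · have hchain : Chain B C f x (Nat.find h') :=
      chain_of_minimal hbij hxA (Nat.find_spec h') (fun i hi => Nat.find_min h' hi)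
    rw [chain_unique hBC hchain hk]
  · exact absurd ⟨k, hk.1, hk.2.1⟩ h'

theorem back_coords (hbc : ∀ x ∈ A ∪ C, ∀ j, x j ∈ Set.range (f x) ∪ P)
    {c : Fin n → Q} {k : ℕ} (hD : ∀ i, i < k → f^[i] c ∈ A ∪ C) :
    ∀ d i, i + d = k → ∀ j, f^[i] c j ∈ Set.range (f^[k] c) ∪ P := by
  intro d
  induction d with
  | zero =>
    intro i hi j
    rw [Nat.add_zero] at hi
    subst hi
    exact Or.inl ⟨j, rfl⟩
  | succ d ih =>
    intro i hi j
    have hiD : f^[i] c ∈ A ∪ C := hD i (by omega)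
    rcases hbc _ hiD j with ⟨j', hj'⟩ | hp
    · rw [← hj', ← Function.iterate_succ_apply' f i c]
      exact ih (i + 1) (by omega) j'
    · exact Or.inr hp

theorem exists_preimage_chain (hP : P.Finite) (hbij : Set.BijOn f (A ∪ C) (B ∪ C))
    (hAB : Disjoint A B) (hAC : Disjoint A C) (hBC : Disjoint B C)
    (hbc : ∀ x ∈ A ∪ C, ∀ j, x j ∈ Set.range (f x) ∪ P)
    {b : Fin n → Q} (hbB : b ∈ B) :
    ∃ c ∈ A, ∃ k, Chain B C f c k ∧ f^[k] c = b := by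
  classical
  set N := (n + hP.toFinset.card) ^ n with hN
  set Sp : ℕ → Prop := fun k =>
    ∃ c, c ∈ A ∪ C ∧ f^[k] c = b ∧ 1 ≤ k ∧ ∀ i, 1 ≤ i → i < k → f^[i] c ∈ C with hSp
  have hbound : ∀ k, Sp k → k ≤ N := by
    rintro k ⟨c, hcD, hfk, hk1, hinter⟩
    have hD : ∀ i, i < k → f^[i] c ∈ A ∪ C := by
      intro i hi
      rcases Nat.eq_zero_or_pos i with rfl | hpos
      · exact hcD
      · exact Or.inr (hinter i hpos hi)
    have hdist : ∀ i j : ℕ, i ≤ k → j ≤ k → i < j → f^[i] c ≠ f^[j] c := by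
      intro i j hik hjk hij h
      have hb' : f^[k - j + i] c = b := by
        rw [Function.iterate_add_apply, h, ← Function.iterate_add_apply,
          Nat.sub_add_cancel hjk, hfk]
      rcases Nat.eq_zero_or_pos (k - j + i) with hz | hpos
      · rw [hz] at hb'
        rcases hcD with hcA | hcC
        · exact Set.disjoint_left.1 hAB (hb' ▸ hcA) hbB
        · exact Set.disjoint_left.1 hBC hbB (hb' ▸ hcC)
      · have hrk : k - j + i < k := by omega
        exact Set.disjoint_left.1 hBC hbB (hb' ▸ hinter _ hpos hrk)
    have hco : ∀ (t : Fin (k + 1)) (j : Fin n), f^[(t : ℕ)] c j ∈ Set.range b ∪ P := by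
      intro t j
      have := back_coords hbc hD (k - (t : ℕ)) (t : ℕ) (by omega) j
      rwa [hfk] at this
    have hinj : Function.Injective (fun t : Fin (k + 1) => f^[(t : ℕ)] c) := by
      intro t t' h
      by_contra hne
      have hne' : (t : ℕ) ≠ (t' : ℕ) := fun hh => hne (Fin.ext hh)
      rcases lt_or_gt_of_ne hne' with hlt | hlt
      · exact hdist t t' (Nat.le_of_lt_succ t.isLt) (Nat.le_of_lt_succ t'.isLt) hlt h
      · exact hdist t' t (Nat.le_of_lt_succ t'.isLt) (Nat.le_of_lt_succ t.isLt) hlt h.symm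
    have := card_bound hP b (k + 1) _ hco hinj
    omega
  have hSp1 : Sp 1 := by
    obtain ⟨c, hc, hfc'⟩ := hbij.surjOn (Or.inl hbB)
    exact ⟨c, hc, by simpa using hfc', le_refl 1, fun i h1 hi => absurd (Nat.lt_of_lt_of_le hi h1) (by omega)⟩
  have h1N : 1 ≤ N := hbound 1 hSp1
  set k0 := Nat.findGreatest Sp N with hk0
  have hSpk0 : Sp k0 := Nat.findGreatest_spec h1N hSp1
  have hk01 : 1 ≤ k0 := Nat.le_findGreatest h1N hSp1
  obtain ⟨c, hcD, hfk, -, hinter⟩ := hSpk0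
  have hcA : c ∈ A := by
    rcases hcD with hcA | hcC
    · exact hcA
    · exfalso
      obtain ⟨c', hc'D, hfc'⟩ := hbij.surjOn (Or.inr hcC)
      have hSpk1 : Sp (k0 + 1) := by
        refine ⟨c', hc'D, ?_, by omega, ?_⟩
        · rw [Function.iterate_succ_apply, hfc', hfk]
        · intro i h1 hik
          obtain ⟨i', rfl⟩ := Nat.exists_eq_succ_of_ne_zero (by omega : i ≠ 0)
          rw [Function.iterate_succ_apply, hfc']
          rcases Nat.eq_zero_or_pos i' with rfl | hpos
          · exact hcC
          · exact hinter i' hpos (by omega)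
      have := Nat.le_findGreatest (hbound _ hSpk1) hSpk1
      omega
  exact ⟨c, hcA, k0, ⟨hk01, hfk ▸ hbB, hinter⟩, hfk⟩

end Gfun

section Bij

variable {n : ℕ} {P : Set Q} {A B C : Set (Fin n → Q)} {f : (Fin n → Q) → (Fin n → Q)}

theorem gfun_bijOn (hP : P.Finite) (hbij : Set.BijOn f (A ∪ C) (B ∪ C))
    (hAB : Disjoint A B) (hAC : Disjoint A C) (hBC : Disjoint B C)
    (hfc : ∀ x ∈ A ∪ C, ∀ j, f x j ∈ Set.range x ∪ P)
    (hbc : ∀ x ∈ A ∪ C, ∀ j, x j ∈ Set.range (f x) ∪ P) :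
    Set.BijOn (gfun B f) A B := by
  have hmaps : ∀ x ∈ A, ∃ k, Chain B C f x k ∧ gfun B f x = f^[k] x := by
    intro x hx
    obtain ⟨k, -, hchain⟩ := exists_hit hP hbij hAB hAC hBC hfc hx
    exact ⟨k, hchain, gfun_eq_of_chain hbij hBC hx hchain⟩
  refine ⟨fun x hx => ?_, ?_, ?_⟩
  · obtain ⟨k, hchain, heq⟩ := hmaps x hx
    rw [heq]
    exact hchain.2.1
  · -- injOn
    have key : ∀ x y, x ∈ A → y ∈ A → ∀ kx ky, Chain B C f x kx → Chain B C f y ky →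
        kx ≤ ky → f^[kx] x = f^[ky] y → x = y := by
      intro x y hx hy kx ky hcx hcy hle heq
      have h1x : 1 ≤ kx := hcx.1
      have h1y : 1 ≤ ky := hcy.1
      have hd : f^[kx] (f^[ky - kx] y) = f^[ky] y := by
        rw [← Function.iterate_add_apply]
        congr 1
        omega
      have hDx : ∀ i, i < kx → f^[i] x ∈ A ∪ C := by
        intro i hi
        rcases Nat.eq_zero_or_pos i with rfl | hpos
        · exact Or.inl hx
        · exact Or.inr (hcx.2.2 i hpos hi)
      have hDy : ∀ i, i < kx → f^[i] (f^[ky - kx] y) ∈ A ∪ C := by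
        intro i hi
        rw [← Function.iterate_add_apply]
        have hlt : i + (ky - kx) < ky := by omega
        rcases Nat.eq_zero_or_pos (i + (ky - kx)) with hz | hpos
        · rw [hz]; exact Or.inl hy
        · exact Or.inr (hcy.2.2 _ hpos hlt)
      have hxy : x = f^[ky - kx] y :=
        iterate_cancel hbij.injOn kx x _ hDx hDy (heq.trans hd.symm)
      rcases Nat.eq_zero_or_pos (ky - kx) with hz | hpos
      · rw [hz] at hxy
        exact hxy
      · exfalso
        have : f^[ky - kx] y ∈ C := hcy.2.2 _ hpos (by omega)
        exact Set.disjoint_left.1 hAC (hxy ▸ hx) this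
    intro x hx y hy heq
    obtain ⟨kx, hcx, hex⟩ := hmaps x hx
    obtain ⟨ky, hcy, hey⟩ := hmaps y hy
    rw [hex, hey] at heq
    rcases le_total kx ky with h | h
    · exact key x y hx hy kx ky hcx hcy h heq
    · exact (key y x hy hx ky kx hcy hcx h heq.symm).symm
  · -- surjOn
    intro b hb
    obtain ⟨c, hcA, k, hchain, hfk⟩ := exists_preimage_chain hP hbij hAB hAC hBC hbc hb
    exact ⟨c, hcA, by rw [gfun_eq_of_chain hbij hBC hcA hchain, hfk]⟩

end Bij

section DefSec

variable {n : ℕ} {P : Set Q} {A B C : Set (Fin n → Q)} {f : (Fin n → Q) → (Fin n → Q)}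

/-- block extraction -/
def bl {n k : ℕ} (i : Fin (k + 1)) (W : (Fin (k + 1) × Fin n) → Q) : Fin n → Q :=
  fun a => W (i, a)

def sigmaMap (n : ℕ) {k : ℕ} (i : Fin k) : Fin (n + n) → (Fin (k + 1) × Fin n) :=
  Fin.addCases (fun a => (i.castSucc, a)) (fun a => (i.succ, a))

def tauMap (n k : ℕ) : Fin (n + n) → (Fin (k + 1) × Fin n) :=
  Fin.addCases (fun a => (0, a)) (fun a => (Fin.last k, a))

def rhoMap (n : ℕ) {k : ℕ} (i : Fin (k + 1)) : Fin n → (Fin (k + 1) × Fin n) :=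
  fun a => (i, a)

theorem comp_sigma {k : ℕ} (W : (Fin (k + 1) × Fin n) → Q) (i : Fin k) :
    W ∘ sigmaMap n i = Fin.append (bl i.castSucc W) (bl i.succ W) := by
  funext j
  refine Fin.addCases (fun a => ?_) (fun a => ?_) j
  · rw [Fin.append_left]
    show W (sigmaMap n i (Fin.castAdd n a)) = _
    rw [sigmaMap, Fin.addCases_left]
    rfl
  · rw [Fin.append_right]
    show W (sigmaMap n i (Fin.natAdd n a)) = _
    rw [sigmaMap, Fin.addCases_right]
    rfl

theorem comp_tau {k : ℕ} (W : (Fin (k + 1) × Fin n) → Q) :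
    W ∘ tauMap n k = Fin.append (bl 0 W) (bl (Fin.last k) W) := by
  funext j
  refine Fin.addCases (fun a => ?_) (fun a => ?_) j
  · rw [Fin.append_left]
    show W (tauMap n k (Fin.castAdd n a)) = _
    rw [tauMap, Fin.addCases_left]
    rfl
  · rw [Fin.append_right]
    show W (tauMap n k (Fin.natAdd n a)) = _
    rw [tauMap, Fin.addCases_right]
    rfl

theorem comp_rho {k : ℕ} (W : (Fin (k + 1) × Fin n) → Q) (i : Fin (k + 1)) :
    W ∘ rhoMap n i = bl i W := rfl

/-- The set of chains of length `k` from `A` through `C` to `B` along the graph `G`. -/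
def chainSet (k : ℕ) (G : Set (Fin (n + n) → Q)) (A B C : Set (Fin n → Q)) :
    Set ((Fin (k + 1) × Fin n) → Q) :=
  (⋂ i ∈ (Finset.univ : Finset (Fin k)), (fun W => W ∘ sigmaMap n i) ⁻¹' G) ∩
    ((fun W => W ∘ rhoMap n 0) ⁻¹' A) ∩ ((fun W => W ∘ rhoMap n (Fin.last k)) ⁻¹' B) ∩
    ⋂ i ∈ Finset.univ.filter (fun i : Fin (k + 1) => 0 < (i : ℕ) ∧ (i : ℕ) < k),
      (fun W => W ∘ rhoMap n i) ⁻¹' C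

theorem chainSet_definable {k : ℕ} {G : Set (Fin (n + n) → Q)}
    (hG : P.Definable Language.order G) (hA : P.Definable Language.order A)
    (hB : P.Definable Language.order B) (hC : P.Definable Language.order C) :
    P.Definable Language.order (chainSet k G A B C) := by
  classical
  refine Set.Definable.inter (Set.Definable.inter (Set.Definable.inter ?_ ?_) ?_) ?_
  · exact Set.definable_biInter_finset (fun i => hG.preimage_comp (sigmaMap n i)) _
  · exact hA.preimage_comp (rhoMap n 0)
  · exact hB.preimage_comp (rhoMap n (Fin.last k))
  · exact Set.definable_biInter_finset (fun i => hC.preimage_comp (rhoMap n i)) _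

/-- The set of pairs (x, f^[k] x) with a chain of length k. -/
def hitSet (k : ℕ) (G : Set (Fin (n + n) → Q)) (A B C : Set (Fin n → Q)) :
    Set (Fin (n + n) → Q) :=
  (fun W => W ∘ tauMap n k) '' chainSet k G A B C

theorem hitSet_definable {k : ℕ} {G : Set (Fin (n + n) → Q)}
    (hG : P.Definable Language.order G) (hA : P.Definable Language.order A)
    (hB : P.Definable Language.order B) (hC : P.Definable Language.order C) :
    P.Definable Language.order (hitSet k G A B C) :=
  (chainSet_definable hG hA hB hC).image_comp (tauMap n k)

theorem graph_gfun_eq (hP : P.Finite) (hbij : Set.BijOn f (A ∪ C) (B ∪ C))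
    (hAB : Disjoint A B) (hAC : Disjoint A C) (hBC : Disjoint B C)
    (hfc : ∀ x ∈ A ∪ C, ∀ j, f x j ∈ Set.range x ∪ P) :
    graphOn A (gfun B f) = ⋃ k ∈ Finset.Icc 1 ((n + hP.toFinset.card) ^ n),
      hitSet k (graphOn (A ∪ C) f) A B C := by
  ext z
  simp only [Set.mem_iUnion, Finset.mem_Icc, exists_prop]
  constructor
  · rintro ⟨x, hxA, rfl⟩
    obtain ⟨k, hkN, hchain⟩ := exists_hit hP hbij hAB hAC hBC hfc hxA
    refine ⟨k, ⟨hchain.1, hkN⟩, ?_⟩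
    set W : (Fin (k + 1) × Fin n) → Q := fun p => f^[(p.1 : ℕ)] x p.2 with hW
    have hbl : ∀ i : Fin (k + 1), bl i W = f^[(i : ℕ)] x := fun i => rfl
    refine ⟨W, ⟨⟨⟨?_, ?_⟩, ?_⟩, ?_⟩, ?_⟩
    · simp only [Set.mem_iInter]
      intro i _
      show W ∘ sigmaMap n i ∈ graphOn (A ∪ C) f
      rw [comp_sigma, hbl, hbl]
      refine ⟨f^[(i.castSucc : ℕ)] x, ?_, ?_⟩
      · simp only [Fin.coe_castSucc]
        rcases Nat.eq_zero_or_pos (i : ℕ) with hz | hpos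
        · rw [hz]; exact Or.inl hxA
        · exact Or.inr (hchain.2.2 _ hpos i.isLt)
      · congr 1
        rw [Fin.val_succ, Fin.coe_castSucc, Function.iterate_succ_apply']
    · show W ∘ rhoMap n 0 ∈ A
      rw [comp_rho, hbl]
      simpa using hxA
    · show W ∘ rhoMap n (Fin.last k) ∈ B
      rw [comp_rho, hbl]
      simpa using hchain.2.1
    · simp only [Set.mem_iInter, Finset.mem_filter]
      rintro i ⟨-, h0, hik⟩
      show W ∘ rhoMap n i ∈ C
      rw [comp_rho, hbl]
      exact hchain.2.2 _ h0 hik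
    · show W ∘ tauMap n k = Fin.append x (gfun B f x)
      rw [comp_tau, hbl, hbl, gfun_eq_of_chain hbij hBC hxA hchain]
      simp
  · rintro ⟨k, ⟨hk1, -⟩, W, hW, rfl⟩
    obtain ⟨⟨⟨hT1, hT2⟩, hT3⟩, hT4⟩ := hW
    simp only [Set.mem_iInter] at hT1 hT4
    set x := bl 0 W with hx
    have hblock : ∀ (i : ℕ) (h : i < k + 1), bl ⟨i, h⟩ W = f^[i] x := by
      intro i
      induction i with
      | zero => intro h; rfl
      | succ i ih =>
        intro h
        have hik : i < k := by omega
        have hprev := ih (by omega)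
        have hmem : W ∘ sigmaMap n ⟨i, hik⟩ ∈ graphOn (A ∪ C) f :=
          hT1 ⟨i, hik⟩ (Finset.mem_univ _)
        rw [comp_sigma] at hmem
        obtain ⟨hD, heq⟩ := mem_graphOn.1 hmem
        have hcs : (⟨i, hik⟩ : Fin k).castSucc = (⟨i, by omega⟩ : Fin (k + 1)) := rfl
        have hsc : (⟨i, hik⟩ : Fin k).succ = (⟨i + 1, h⟩ : Fin (k + 1)) := rfl
        rw [hcs] at heq
        rw [hsc] at heq
        rw [heq, hprev]
        exact (Function.iterate_succ_apply' f i x).symm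
    have hxA : x ∈ A := by
      have h2 : W ∘ rhoMap n 0 ∈ A := hT2
      rwa [comp_rho] at h2
    have hlast : bl (Fin.last k) W = f^[k] x := hblock k (Nat.lt_succ_self k)
    have hchain : Chain B C f x k := by
      refine ⟨hk1, ?_, ?_⟩
      · have h3 : W ∘ rhoMap n (Fin.last k) ∈ B := hT3
        rwa [comp_rho, hlast] at h3
      · intro i h0 hik
        have h4 : W ∘ rhoMap n (⟨i, by omega⟩ : Fin (k + 1)) ∈ C :=
          hT4 _ (Finset.mem_filter.2 ⟨Finset.mem_univ _, ⟨h0, hik⟩⟩)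
        rw [comp_rho, hblock i (by omega)] at h4
        exact h4
    refine ⟨x, hxA, ?_⟩
    show W ∘ tauMap n k = Fin.append x (gfun B f x)
    rw [comp_tau, hlast, gfun_eq_of_chain hbij hBC hxA hchain]

end DefSec

end DLOCancel

/-- The Grothendieck semiring of a DLO without endpoints is cancellative. -/
theorem dlo_cancellative {Q : Type*} [LinearOrder Q] [DenselyOrdered Q] [NoMinOrder Q]
    [NoMaxOrder Q] [Nonempty Q] {n : ℕ} (A B C : Set (Fin n → Q))
    (hA : DLODefinable A) (hB : DLODefinable B) (hC : DLODefinable C)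
    (hAB : Disjoint A B) (hAC : Disjoint A C) (hBC : Disjoint B C)
    (h : DefBij (A ∪ C) (B ∪ C)) : DefBij A B := by
  classical
  obtain ⟨f, hbij, PG, hPGfin, hPG⟩ := h
  obtain ⟨PA, hPAfin, hPA⟩ := hA
  obtain ⟨PB, hPBfin, hPB⟩ := hB
  obtain ⟨PC, hPCfin, hPC⟩ := hC
  set P : Set Q := PA ∪ PB ∪ PC ∪ PG with hPdef
  have hP : P.Finite := (((hPAfin.union hPBfin).union hPCfin).union hPGfin)
  have hPA' : P.Definable Language.order A :=
    hPA.mono (by intro a ha; exact Or.inl (Or.inl (Or.inl ha)))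
  have hPB' : P.Definable Language.order B :=
    hPB.mono (by intro a ha; exact Or.inl (Or.inl (Or.inr ha)))
  have hPC' : P.Definable Language.order C :=
    hPC.mono (by intro a ha; exact Or.inl (Or.inr ha))
  have hPG' : P.Definable Language.order (graphOn (A ∪ C) f) :=
    hPG.mono (by intro a ha; exact Or.inr ha)
  have hfc : ∀ x ∈ A ∪ C, ∀ j, f x j ∈ Set.range x ∪ P :=
    fun x hx j => DLOCancel.forward_coord hP hPG' hx j
  have hbc : ∀ x ∈ A ∪ C, ∀ j, x j ∈ Set.range (f x) ∪ P :=
    fun x hx j => DLOCancel.backward_coord hP hPG' hbij.injOn hx j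
  refine ⟨DLOCancel.gfun B f, DLOCancel.gfun_bijOn hP hbij hAB hAC hBC hfc hbc, ?_⟩
  rw [DLOCancel.graph_gfun_eq hP hbij hAB hAC hBC hfc]
  exact ⟨P, hP, Set.definable_biUnion_finset
    (fun k => DLOCancel.hitSet_definable hPG' hPA' hPB' hPC') _⟩
end

section
/- Let Q be a nonempty dense linear order without endpoints and let D₁, D₂ ⊆ Q^n be definable sets. If there exists a definable bijection from D₁ onto D₂, then there exists a strictly decreasing finite tuple a_1 > a_2 > ⋯ > a_m in Q such that D₁ and D₂ are both definable with parameters among {a_1,…,a_m} and, for every vector v ∈ ℕ^{m+1}, the characteristics χ_v(D₁) and χ_v(D₂) are equal. -/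
open FirstOrder FirstOrder.Language

attribute [local instance] FirstOrder.Language.orderStructure

/-- `x, y ∈ Q^n` have the same order type over the tuple `a`. -/
def SameOrderType {Q : Type*} [LinearOrder Q] {m n : ℕ} (a : Fin m → Q)
    (x y : Fin n → Q) : Prop :=
  (∀ i j, x i < x j ↔ y i < y j) ∧
    ∀ i k, (x i < a k ↔ y i < a k) ∧ (a k < x i ↔ a k < y i)

/-- Membership in the `g`-th gap determined by the strictly decreasing tuple `a`:
`G_0 = (a 0, ∞)`, `G_g = (a g, a (g-1))` for `0 < g < m`, and `G_m = (-∞, a (m-1))`. -/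
def InGap {Q : Type*} [LinearOrder Q] {m : ℕ} (a : Fin m → Q) (g : Fin (m + 1)) (q : Q) :
    Prop :=
  (∀ h : (g : ℕ) < m, a ⟨g, h⟩ < q) ∧ ∀ j : Fin m, (j : ℕ) + 1 = (g : ℕ) → q < a j

/-- The number of distinct values among the coordinates of `x` lying in the `g`-th gap. -/
noncomputable def gapCount {Q : Type*} [LinearOrder Q] {m n : ℕ} (a : Fin m → Q)
    (x : Fin n → Q) (g : Fin (m + 1)) : ℕ :=
  Set.ncard {q : Q | (∃ i, x i = q) ∧ InGap a g q}

/-- The characteristic `χ_v(D)`: the number of equivalence classes of points of `D` under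
"same order type over `a`" all of whose members have gap-count vector `v`. -/
noncomputable def chi {Q : Type*} [LinearOrder Q] {m n : ℕ} (a : Fin m → Q)
    (v : Fin (m + 1) → ℕ) (D : Set (Fin n → Q)) : ℕ :=
  Set.ncard {C : Set (Fin n → Q) |
    ∃ x ∈ D, C = {y ∈ D | SameOrderType a x y} ∧ ∀ g, gapCount a x g = v g}

/-! ### Auxiliary machinery: order patterns and a back-and-forth invariance lemma -/

set_option linter.unusedSectionVars false

section Cong

variable {Q : Type*} [LinearOrder Q]

/-- Two finite configurations have the same order pattern. -/
def Cong {γ : Type*} (u w : γ → Q) : Prop := ∀ s t, u s < u t ↔ w s < w t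

variable {γ : Type*} {u w : γ → Q}

lemma Cong.symm (h : Cong u w) : Cong w u := fun s t => (h s t).symm

lemma Cong.le (h : Cong u w) (s t : γ) : u s ≤ u t ↔ w s ≤ w t := by
  rw [← not_lt, ← not_lt, h t s]

lemma Cong.eq (h : Cong u w) (s t : γ) : u s = u t ↔ w s = w t := by
  rw [le_antisymm_iff, le_antisymm_iff, h.le s t, h.le t s]

variable [DenselyOrdered Q] [NoMinOrder Q] [NoMaxOrder Q] [Nonempty Q]

lemma Cong.exists_ext [Finite γ] (h : Cong u w) (d : Q) :
    ∃ d', (∀ s, (u s < d ↔ w s < d')) ∧ (∀ s, (d < u s ↔ d' < w s)) := by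
  by_cases hd : ∃ s₀, u s₀ = d
  · obtain ⟨s₀, hs₀⟩ := hd
    refine ⟨w s₀, fun s => ?_, fun s => ?_⟩
    · rw [← hs₀]; exact h s s₀
    · rw [← hs₀]; exact h s₀ s
  · push_neg at hd
    have hcover : ∀ s, u s < d ∨ d < u s := fun s => (hd s).lt_or_gt
    set S₁ : Set γ := {s | u s < d} with hS₁def
    set S₂ : Set γ := {s | d < u s} with hS₂def
    rcases S₁.eq_empty_or_nonempty with hS₁ | hS₁ <;>
      rcases S₂.eq_empty_or_nonempty with hS₂ | hS₂
    · obtain ⟨d'⟩ := ‹Nonempty Q›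
      refine ⟨d', fun s => ?_, fun s => ?_⟩ <;>
        rcases hcover s with hs | hs
      · exact absurd (Set.eq_empty_iff_forall_notMem.1 hS₁ s hs) id
      · exact absurd (Set.eq_empty_iff_forall_notMem.1 hS₂ s hs) id
      · exact absurd (Set.eq_empty_iff_forall_notMem.1 hS₁ s hs) id
      · exact absurd (Set.eq_empty_iff_forall_notMem.1 hS₂ s hs) id
    · obtain ⟨s₂, hs₂, hmin⟩ := Set.exists_min_image S₂ w (Set.toFinite S₂) hS₂
      obtain ⟨d', hd'⟩ := exists_lt (w s₂)
      have key : ∀ s, d < u s := by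
        intro s
        rcases hcover s with hs | hs
        · exact absurd (Set.eq_empty_iff_forall_notMem.1 hS₁ s hs) id
        · exact hs
      have key' : ∀ s, d' < w s := fun s => hd'.trans_le (hmin s (key s))
      exact ⟨d', fun s => iff_of_false (not_lt.2 (key s).le) (not_lt.2 (key' s).le),
        fun s => iff_of_true (key s) (key' s)⟩
    · obtain ⟨s₁, hs₁, hmax⟩ := Set.exists_max_image S₁ w (Set.toFinite S₁) hS₁
      obtain ⟨d', hd'⟩ := exists_gt (w s₁)
      have key : ∀ s, u s < d := by
        intro s
        rcases hcover s with hs | hs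
        · exact hs
        · exact absurd (Set.eq_empty_iff_forall_notMem.1 hS₂ s hs) id
      have key' : ∀ s, w s < d' := fun s => (hmax s (key s)).trans_lt hd'
      exact ⟨d', fun s => iff_of_true (key s) (key' s),
        fun s => iff_of_false (not_lt.2 (key s).le) (not_lt.2 (key' s).le)⟩
    · obtain ⟨s₁, hs₁, hmax⟩ := Set.exists_max_image S₁ w (Set.toFinite S₁) hS₁
      obtain ⟨s₂, hs₂, hmin⟩ := Set.exists_min_image S₂ w (Set.toFinite S₂) hS₂
      have h12 : w s₁ < w s₂ := (h s₁ s₂).1 (hs₁.trans hs₂)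
      obtain ⟨d', hd'₁, hd'₂⟩ := exists_between h12
      refine ⟨d', fun s => ?_, fun s => ?_⟩
      · constructor
        · intro hs; exact (hmax s hs).trans_lt hd'₁
        · intro hs
          rcases hcover s with h' | h'
          · exact h'
          · exact absurd ((hd'₂.trans_le (hmin s h')).trans hs) (lt_irrefl _)
      · constructor
        · intro hs; exact hd'₂.trans_le (hmin s hs)
        · intro hs
          rcases hcover s with h' | h'
          · exact absurd (hs.trans ((hmax s h').trans_lt hd'₁)) (lt_irrefl _)
          · exact h'

end Cong

lemma order_term_eq_var {γ : Type*} (t : Language.order.Term γ) : ∃ s, t = Term.var s := by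
  cases t with
  | var s => exact ⟨s, rfl⟩
  | func f _ => exact isEmptyElim f

section Invariance

variable {Q : Type*} [LinearOrder Q] [DenselyOrdered Q] [NoMinOrder Q] [NoMaxOrder Q]
  [Nonempty Q]

instance : Language.order.OrderedStructure Q := ⟨fun _ => Iff.rfl⟩

lemma cong_snoc {β : Type*} {l : ℕ} {v w : β → Q} {xs ys : Fin l → Q} {d d' : Q}
    (h : Cong (Sum.elim v xs) (Sum.elim w ys))
    (h1 : ∀ s : β ⊕ Fin l, (Sum.elim v xs s < d ↔ Sum.elim w ys s < d'))
    (h2 : ∀ s : β ⊕ Fin l, (d < Sum.elim v xs s ↔ d' < Sum.elim w ys s)) :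
    Cong (Sum.elim v (Fin.snoc xs d)) (Sum.elim w (Fin.snoc ys d')) := by
  rintro (s | s) (t | t)
  · exact h (Sum.inl s) (Sum.inl t)
  · refine Fin.lastCases ?_ ?_ t
    · simpa using h1 (Sum.inl s)
    · intro t₀; simpa using h (Sum.inl s) (Sum.inr t₀)
  · refine Fin.lastCases ?_ ?_ s
    · simpa using h2 (Sum.inl t)
    · intro s₀; simpa using h (Sum.inr s₀) (Sum.inl t)
  · refine Fin.lastCases ?_ ?_ s
    · refine Fin.lastCases ?_ ?_ t
      · simp
      · intro t₀; simpa using h2 (Sum.inr t₀)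
    · intro s₀
      refine Fin.lastCases ?_ ?_ t
      · simpa using h1 (Sum.inr s₀)
      · intro t₀; simpa using h (Sum.inr s₀) (Sum.inr t₀)

/-- Realization of a first-order formula in the language of orders only depends on the
order pattern of the assignment (this is a back-and-forth argument). -/
lemma realize_iff_of_cong {β : Type*} [Finite β] {l : ℕ}
    (φ : Language.order.BoundedFormula β l) :
    ∀ {v w : β → Q} {xs ys : Fin l → Q},
      Cong (Sum.elim v xs) (Sum.elim w ys) → (φ.Realize v xs ↔ φ.Realize w ys) := by
  induction φ with
  | falsum => exact fun _ => Iff.rfl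
  | equal t₁ t₂ =>
    intro v w xs ys h
    obtain ⟨s₁, rfl⟩ := order_term_eq_var t₁
    obtain ⟨s₂, rfl⟩ := order_term_eq_var t₂
    simp only [BoundedFormula.Realize, Term.realize_var]
    exact Cong.eq h s₁ s₂
  | rel R ts =>
    intro v w xs ys h
    cases R
    simp only [BoundedFormula.Realize]
    rw [order.relation_eq_leSymb Language.orderRel.le, relMap_leSymb, relMap_leSymb]
    obtain ⟨s₁, h₁⟩ := order_term_eq_var (ts 0)
    obtain ⟨s₂, h₂⟩ := order_term_eq_var (ts 1)
    rw [h₁, h₂]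
    simp only [Term.realize_var]
    exact Cong.le h s₁ s₂
  | imp φ ψ ihφ ihψ =>
    intro v w xs ys h
    simp only [BoundedFormula.realize_imp]
    exact imp_congr (ihφ h) (ihψ h)
  | all φ ih =>
    intro v w xs ys h
    simp only [BoundedFormula.realize_all]
    constructor
    · intro H d'
      obtain ⟨d, hd1, hd2⟩ := Cong.exists_ext (fun s t => (h s t).symm) d'
      exact (ih (cong_snoc h (fun s => (hd1 s).symm) (fun s => (hd2 s).symm))).1 (H d)
    · intro H d
      obtain ⟨d', hd1, hd2⟩ := Cong.exists_ext h d
      exact (ih (cong_snoc h hd1 hd2)).2 (H d')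

end Invariance

/-- Same order pattern over the parameter set `A`. -/
def PEq {Q : Type*} [LinearOrder Q] (A : Set Q) {γ : Type*} (u w : γ → Q) : Prop :=
  (∀ s t, u s < u t ↔ w s < w t) ∧
    ∀ s, ∀ c ∈ A, (u s < c ↔ w s < c) ∧ (c < u s ↔ c < w s)

section PEqLemmas

variable {Q : Type*} [LinearOrder Q] [DenselyOrdered Q] [NoMinOrder Q] [NoMaxOrder Q]
  [Nonempty Q]

lemma PEq.cong {A : Set Q} {k : ℕ} {x y : Fin k → Q} (h : PEq A x y) :
    Cong (Sum.elim (Subtype.val : A → Q) x) (Sum.elim (Subtype.val : A → Q) y) := by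
  rintro (c | i) (c' | j)
  · exact Iff.rfl
  · simpa using ((h.2 j c c.2).2)
  · simpa using ((h.2 i c' c'.2).1)
  · exact h.1 i j

/-- Membership in a definable set only depends on the order pattern over the parameters. -/
lemma PEq.mem_iff {A : Set Q} (hA : A.Finite) {k : ℕ} {S : Set (Fin k → Q)}
    (hS : A.Definable Language.order S) {x y : Fin k → Q} (h : PEq A x y) :
    x ∈ S ↔ y ∈ S := by
  haveI : Finite A := hA.to_subtype
  obtain ⟨φ, hφ⟩ := Set.definable_iff_exists_formula_sum.1 hS
  rw [hφ]
  simp only [Set.mem_setOf_eq]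
  refine realize_iff_of_cong (xs := finZeroElim) (ys := finZeroElim) φ ?_
  have hc := h.cong
  rintro (s | s) (t | t)
  · exact hc s t
  · exact isEmptyElim t
  · exact isEmptyElim s
  · exact isEmptyElim s

/-- Perturbation: a point outside a finite set can be moved without changing its cut. -/
lemma exists_perturb {F : Set Q} (hF : F.Finite) {q : Q} (hq : q ∉ F) :
    ∃ q', q' ≠ q ∧ ∀ c ∈ F, (c < q ↔ c < q') ∧ (q < c ↔ q' < c) := by
  set F₁ : Set Q := {c ∈ F | c < q} with hF₁def
  rcases F₁.eq_empty_or_nonempty with hF₁ | hF₁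
  · obtain ⟨q', hq'⟩ := exists_lt q
    refine ⟨q', hq'.ne, fun c hc => ?_⟩
    have hcq : q < c := by
      rcases lt_trichotomy c q with h' | h' | h'
      · exact absurd (Set.eq_empty_iff_forall_notMem.1 hF₁ c ⟨hc, h'⟩) id
      · exact absurd (h' ▸ hc) hq
      · exact h'
    refine ⟨iff_of_false (not_lt.2 hcq.le) (not_lt.2 (hq'.trans hcq).le), ?_⟩
    exact iff_of_true hcq (hq'.trans hcq)
  · obtain ⟨l, hl, hlmax⟩ := Set.exists_max_image F₁ id (hF.subset (Set.sep_subset _ _)) hF₁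
    obtain ⟨q', hq'₁, hq'₂⟩ := exists_between hl.2
    refine ⟨q', hq'₂.ne, fun c hc => ?_⟩
    constructor
    · constructor
      · intro h'; exact lt_of_le_of_lt (hlmax c ⟨hc, h'⟩) hq'₁
      · intro h'; exact h'.trans hq'₂
    · constructor
      · intro h'; exact hq'₂.trans h'
      · intro h'
        rcases lt_trichotomy q c with h'' | h'' | h''
        · exact h''
        · exact absurd (h'' ▸ hc) hq
        · exact absurd ((hlmax c ⟨hc, h''⟩).trans_lt hq'₁) (not_lt.2 h'.le)

/-- Replace every occurrence of a non-parameter value `q` in a tuple by a nearby `q'`,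
preserving the order pattern over `A`. -/
lemma exists_replace {A : Set Q} (hA : A.Finite) {K : ℕ} (z : Fin K → Q) {q : Q}
    (hqA : q ∉ A) :
    ∃ (z' : Fin K → Q) (q' : Q), q' ≠ q ∧ PEq A z z' ∧
      (∀ i, z i = q → z' i = q') ∧ (∀ i, z i ≠ q → z' i = z i) := by
  classical
  set F : Set Q := (Set.range z ∪ A) \ {q} with hFdef
  have hF : F.Finite := ((Set.finite_range z).union hA).diff
  have hqF : q ∉ F := fun h => h.2 rfl
  obtain ⟨q', hq'ne, hq'⟩ := exists_perturb hF hqF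
  refine ⟨fun i => if z i = q then q' else z i, q', hq'ne, ⟨?_, ?_⟩,
    fun i h => by simp [h], fun i h => by simp [h]⟩
  · intro i j
    beta_reduce
    by_cases hi : z i = q <;> by_cases hj : z j = q
    · rw [if_pos hi, if_pos hj, hi, hj]
      exact iff_of_false (lt_irrefl q) (lt_irrefl q')
    · have hzj : z j ∈ F := ⟨Or.inl ⟨j, rfl⟩, hj⟩
      rw [if_pos hi, if_neg hj, hi]
      exact (hq' _ hzj).2
    · have hzi : z i ∈ F := ⟨Or.inl ⟨i, rfl⟩, hi⟩
      rw [if_neg hi, if_pos hj, hj]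
      exact (hq' _ hzi).1
    · rw [if_neg hi, if_neg hj]
  · intro i c hc
    beta_reduce
    by_cases hi : z i = q
    · have hcF : c ∈ F := ⟨Or.inr hc, fun h => hqA (h ▸ hc)⟩
      simp only [hi, if_pos rfl]
      exact ⟨(hq' _ hcF).2, (hq' _ hcF).1⟩
    · rw [if_neg hi]
      exact ⟨Iff.rfl, Iff.rfl⟩

end PEqLemmas

section Rel

variable {Q : Type*} [LinearOrder Q] {A : Set Q} {n : ℕ} {x x' : Fin n → Q}

/-- Correspondence of values along a pattern-equal pair of tuples. -/
def ORel (A : Set Q) (x x' : Fin n → Q) (p p' : Q) : Prop :=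
  (∃ i, x i = p ∧ x' i = p') ∨ (p ∈ A ∧ p' = p)

lemma ORel.lt_iff (hxx : PEq A x x') {p p' q q' : Q}
    (h1 : ORel A x x' p p') (h2 : ORel A x x' q q') : p < q ↔ p' < q' := by
  rcases h1 with ⟨i, rfl, rfl⟩ | ⟨hp, rfl⟩ <;> rcases h2 with ⟨j, rfl, rfl⟩ | ⟨hq, rfl⟩
  · exact hxx.1 i j
  · exact (hxx.2 i _ hq).1
  · exact (hxx.2 j _ hp).2
  · exact Iff.rfl

lemma peq_of_rel (hxx : PEq A x x') {K : ℕ} {z z' : Fin K → Q}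
    (hz : ∀ s, ORel A x x' (z s) (z' s)) : PEq A z z' :=
  ⟨fun s t => ORel.lt_iff hxx (hz s) (hz t),
   fun s c hc => ⟨ORel.lt_iff hxx (hz s) (Or.inr ⟨hc, rfl⟩),
     ORel.lt_iff hxx (Or.inr ⟨hc, rfl⟩) (hz s)⟩⟩

lemma exists_rel_tuple (x x' : Fin n → Q) {k : ℕ} (y : Fin k → Q)
    (hy : ∀ j, (∃ i, x i = y j) ∨ y j ∈ A) :
    ∃ y' : Fin k → Q, ∀ j, ORel A x x' (y j) (y' j) := by
  classical
  refine ⟨fun j => if h : ∃ i, x i = y j then x' h.choose else y j, fun j => ?_⟩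
  beta_reduce
  by_cases h : ∃ i, x i = y j
  · rw [dif_pos h]
    exact Or.inl ⟨h.choose, h.choose_spec, rfl⟩
  · rw [dif_neg h]
    rcases hy j with h' | h'
    · exact absurd h' h
    · exact Or.inr ⟨h', rfl⟩

end Rel

section Misc

variable {Q : Type*} [LinearOrder Q]

lemma sot_iff_peq {m k : ℕ} {a : Fin m → Q} {x y : Fin k → Q} :
    SameOrderType a x y ↔ PEq (Set.range a) x y := by
  constructor
  · rintro ⟨h1, h2⟩
    refine ⟨h1, ?_⟩
    rintro i c ⟨k, rfl⟩
    exact h2 i k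
  · rintro ⟨h1, h2⟩
    exact ⟨h1, fun i k => h2 i (a k) ⟨k, rfl⟩⟩

lemma not_mem_range_of_inGap {m : ℕ} {a : Fin m → Q} (ha : StrictAnti a) {g : Fin (m + 1)}
    {q : Q} (hg : InGap a g q) : q ∉ Set.range a := by
  rintro ⟨k, rfl⟩
  rcases le_or_gt (g : ℕ) (k : ℕ) with h | h
  · have hgm : (g : ℕ) < m := lt_of_le_of_lt h k.isLt
    have h1 := hg.1 hgm
    have h2 : a k ≤ a ⟨g, hgm⟩ := ha.antitone (by simp [Fin.le_def, h])
    exact absurd (h1.trans_le h2) (lt_irrefl _)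
  · have hglt : (g : ℕ) - 1 < m := by omega
    have h2 := hg.2 ⟨(g : ℕ) - 1, hglt⟩ (by simp; omega)
    have h3 : a ⟨(g : ℕ) - 1, hglt⟩ ≤ a k := ha.antitone (by simp [Fin.le_def]; omega)
    exact absurd (h2.trans_le h3) (lt_irrefl _)

lemma exists_strictAnti_enum {A : Set Q} (hA : A.Finite) :
    ∃ (m : ℕ) (a : Fin m → Q), StrictAnti a ∧ Set.range a = A := by
  classical
  set s := hA.toFinset with hs
  refine ⟨s.card, fun i => ((s.orderIsoOfFin rfl) i.rev : Q), ?_, ?_⟩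
  · intro i j hij
    have : ((s.orderIsoOfFin rfl) j.rev : s) < (s.orderIsoOfFin rfl) i.rev :=
      (s.orderIsoOfFin rfl).strictMono (Fin.rev_lt_rev.2 hij)
    exact this
  · ext q
    constructor
    · rintro ⟨i, rfl⟩
      have := ((s.orderIsoOfFin rfl) i.rev).2
      rwa [Set.Finite.mem_toFinset] at this
    · intro hq
      obtain ⟨i, hi⟩ := (s.orderIsoOfFin rfl).surjective ⟨q, (Set.Finite.mem_toFinset hA).2 hq⟩
      exact ⟨i.rev, by beta_reduce; rw [Fin.rev_rev, hi]⟩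

end Misc

section Graph

variable {Q : Type*} [LinearOrder Q] [DenselyOrdered Q] [NoMinOrder Q] [NoMaxOrder Q]
  [Nonempty Q] {n : ℕ} {D₁ D₂ : Set (Fin n → Q)} {f : (Fin n → Q) → (Fin n → Q)} {A : Set Q}

lemma mem_graph {x : Fin n → Q} (hx : x ∈ D₁) : Fin.append x (f x) ∈ graphOn D₁ f :=
  ⟨x, hx, rfl⟩

/-- Every coordinate of `f x` is a coordinate of `x` or a parameter. -/
lemma coord_image (hA : A.Finite) (hG : A.Definable Language.order (graphOn D₁ f))
    {x : Fin n → Q} (hx : x ∈ D₁) (j : Fin n) : (∃ i, x i = f x j) ∨ f x j ∈ A := by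
  by_contra hcon
  push_neg at hcon
  obtain ⟨h1, h2⟩ := hcon
  obtain ⟨z', q', hne, hpeq, hq1, hq2⟩ := exists_replace hA (Fin.append x (f x)) h2
  have hz' : z' ∈ graphOn D₁ f := (hpeq.mem_iff hA hG).1 (mem_graph hx)
  obtain ⟨x₁, hx₁, he⟩ := hz'
  have hx₁x : x₁ = x := by
    funext i
    have e1 : z' (Fin.castAdd n i) = x₁ i := by rw [he, Fin.append_left]
    have e2 : z' (Fin.castAdd n i) = x i := by
      rw [hq2 (Fin.castAdd n i) (by rw [Fin.append_left]; exact h1 i), Fin.append_left]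
    rw [← e1, e2]
  have e3 : z' (Fin.natAdd n j) = q' :=
    hq1 (Fin.natAdd n j) (by rw [Fin.append_right])
  have e4 : z' (Fin.natAdd n j) = f x j := by
    rw [he, Fin.append_right, hx₁x]
  exact hne (by rw [← e3, e4])

/-- Every coordinate of `x` is a coordinate of `f x` or a parameter. -/
lemma coord_preimage (hA : A.Finite) (hG : A.Definable Language.order (graphOn D₁ f))
    (hinj : Set.InjOn f D₁) {x : Fin n → Q} (hx : x ∈ D₁) (i : Fin n) :
    (∃ j, f x j = x i) ∨ x i ∈ A := by
  by_contra hcon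
  push_neg at hcon
  obtain ⟨h1, h2⟩ := hcon
  obtain ⟨z', q', hne, hpeq, hq1, hq2⟩ := exists_replace hA (Fin.append x (f x)) h2
  have hz' : z' ∈ graphOn D₁ f := (hpeq.mem_iff hA hG).1 (mem_graph hx)
  obtain ⟨x₁, hx₁, he⟩ := hz'
  have hfx : f x₁ = f x := by
    funext j
    have e1 : z' (Fin.natAdd n j) = f x₁ j := by rw [he, Fin.append_right]
    have e2 : z' (Fin.natAdd n j) = f x j := by
      rw [hq2 (Fin.natAdd n j) (by rw [Fin.append_right]; exact h1 j), Fin.append_right]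
    rw [← e1, e2]
  have hx₁x : x₁ = x := hinj hx₁ hx hfx
  have e3 : z' (Fin.castAdd n i) = q' :=
    hq1 (Fin.castAdd n i) (by rw [Fin.append_left])
  have e4 : z' (Fin.castAdd n i) = x i := by rw [he, Fin.append_left, hx₁x]
  exact hne (by rw [← e3, e4])

/-- `f` transfers order patterns forward. -/
lemma peq_map (hA : A.Finite) (hG : A.Definable Language.order (graphOn D₁ f))
    {x x' : Fin n → Q} (hx : x ∈ D₁) (hx' : x' ∈ D₁) (hpeq : PEq A x x') :
    PEq A (f x) (f x') := by
  obtain ⟨y', hy'⟩ := exists_rel_tuple x x' (f x) (fun j => coord_image hA hG hx j)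
  have hz : ∀ s, ORel A x x' (Fin.append x (f x) s) (Fin.append x' y' s) := by
    intro s
    refine Fin.addCases (fun i => ?_) (fun j => ?_) s
    · rw [Fin.append_left, Fin.append_left]
      exact Or.inl ⟨i, rfl, rfl⟩
    · rw [Fin.append_right, Fin.append_right]
      exact hy' j
  have hmem : Fin.append x' y' ∈ graphOn D₁ f :=
    ((peq_of_rel hpeq hz).mem_iff hA hG).1 (mem_graph hx)
  obtain ⟨x₁, hx₁, he⟩ := hmem
  have hxx₁ : x₁ = x' := by
    funext i
    have := congrFun he (Fin.castAdd n i)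
    rw [Fin.append_left, Fin.append_left] at this
    exact this.symm
  have hy'f : y' = f x' := by
    funext j
    have := congrFun he (Fin.natAdd n j)
    rw [Fin.append_right, Fin.append_right, hxx₁] at this
    exact this
  have := peq_of_rel hpeq hy'
  rwa [hy'f] at this

/-- `f` transfers order patterns backward. -/
lemma peq_rev (hA : A.Finite) (hG : A.Definable Language.order (graphOn D₁ f))
    (hinj : Set.InjOn f D₁) {x x' : Fin n → Q} (hx : x ∈ D₁) (hx' : x' ∈ D₁)
    (hpf : PEq A (f x) (f x')) : PEq A x x' := by
  obtain ⟨x'', hx''⟩ :=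
    exists_rel_tuple (f x) (f x') x (fun i => coord_preimage hA hG hinj hx i)
  have hz : ∀ s, ORel A (f x) (f x') (Fin.append x (f x) s) (Fin.append x'' (f x') s) := by
    intro s
    refine Fin.addCases (fun i => ?_) (fun j => ?_) s
    · rw [Fin.append_left, Fin.append_left]
      exact hx'' i
    · rw [Fin.append_right, Fin.append_right]
      exact Or.inl ⟨j, rfl, rfl⟩
  have hmem : Fin.append x'' (f x') ∈ graphOn D₁ f :=
    ((peq_of_rel hpf hz).mem_iff hA hG).1 (mem_graph hx)
  obtain ⟨x₁, hx₁, he⟩ := hmem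
  have hxx₁ : x₁ = x'' := by
    funext i
    have := congrFun he (Fin.castAdd n i)
    rw [Fin.append_left, Fin.append_left] at this
    exact this.symm
  have hfeq : f x₁ = f x' := by
    funext j
    have := congrFun he (Fin.natAdd n j)
    rw [Fin.append_right, Fin.append_right] at this
    exact this.symm
  have hx₁' : x₁ = x' := hinj hx₁ hx' hfeq
  have := peq_of_rel hpf hx''
  rwa [← hxx₁, hx₁'] at this

end Graph

/-- If two definable subsets of `Q^n` are in definable bijection, then there is a strictly
decreasing parameter tuple over which both are definable and all their characteristics agree. -/
theorem dlo_defBij_chi_eq {Q : Type*} [LinearOrder Q] [DenselyOrdered Q] [NoMinOrder Q]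
    [NoMaxOrder Q] [Nonempty Q] {n : ℕ} (D₁ D₂ : Set (Fin n → Q))
    (h₁ : DLODefinable D₁) (h₂ : DLODefinable D₂) (h : DefBij D₁ D₂) :
    ∃ (m : ℕ) (a : Fin m → Q), StrictAnti a ∧
      (Set.range a).Definable Language.order D₁ ∧
      (Set.range a).Definable Language.order D₂ ∧
      ∀ v : Fin (m + 1) → ℕ, chi a v D₁ = chi a v D₂ := by
  obtain ⟨A₁, hA₁, hD₁⟩ := h₁
  obtain ⟨A₂, hA₂, hD₂⟩ := h₂
  obtain ⟨f, hbij, A₃, hA₃, hG₃⟩ := h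
  set A : Set Q := A₁ ∪ A₂ ∪ A₃ with hAdef
  have hA : A.Finite := (hA₁.union hA₂).union hA₃
  obtain ⟨m, a, ha, hrange⟩ := exists_strictAnti_enum hA
  have hG : (Set.range a).Definable Language.order (graphOn D₁ f) := by
    rw [hrange]; exact hG₃.mono Set.subset_union_right
  have hAr : (Set.range a).Finite := Set.finite_range a
  refine ⟨m, a, ha, ?_, ?_, ?_⟩
  · rw [hrange]
    exact hD₁.mono (Set.subset_union_of_subset_left Set.subset_union_left _)
  · rw [hrange]
    exact hD₂.mono (Set.subset_union_of_subset_left Set.subset_union_right _)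
  intro v
  have hgap : ∀ x ∈ D₁, ∀ g, gapCount a x g = gapCount a (f x) g := by
    intro x hx g
    unfold gapCount
    congr 1
    ext q
    simp only [Set.mem_setOf_eq, and_congr_left_iff]
    intro hq
    have hqa : q ∉ Set.range a := not_mem_range_of_inGap ha hq
    constructor
    · rintro ⟨i, rfl⟩
      rcases coord_preimage hAr hG hbij.injOn hx i with ⟨j, hj⟩ | hmem
      · exact ⟨j, hj⟩
      · exact absurd hmem hqa
    · rintro ⟨j, rfl⟩
      rcases coord_image hAr hG hx j with ⟨i, hi⟩ | hmem
      · exact ⟨i, hi⟩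
      · exact absurd hmem hqa
  have hsot : ∀ x ∈ D₁, ∀ x' ∈ D₁,
      (SameOrderType a x x' ↔ SameOrderType a (f x) (f x')) := by
    intro x hx x' hx'
    rw [sot_iff_peq, sot_iff_peq]
    exact ⟨fun hp => peq_map hAr hG hx hx' hp, fun hp => peq_rev hAr hG hbij.injOn hx hx' hp⟩
  have himg : ∀ x ∈ D₁,
      f '' {y ∈ D₁ | SameOrderType a x y} = {z ∈ D₂ | SameOrderType a (f x) z} := by
    intro x hx
    ext z
    constructor
    · rintro ⟨y, ⟨hy, hsoty⟩, rfl⟩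
      exact ⟨hbij.mapsTo hy, (hsot x hx y hy).1 hsoty⟩
    · rintro ⟨hz, hsotz⟩
      obtain ⟨y, hy, rfl⟩ := hbij.surjOn hz
      exact ⟨y, ⟨hy, (hsot x hx y hy).2 hsotz⟩, rfl⟩
  set S₁ : Set (Set (Fin n → Q)) := {C | ∃ x ∈ D₁,
    C = {y ∈ D₁ | SameOrderType a x y} ∧ ∀ g, gapCount a x g = v g} with hS₁def
  set S₂ : Set (Set (Fin n → Q)) := {C | ∃ x ∈ D₂,
    C = {y ∈ D₂ | SameOrderType a x y} ∧ ∀ g, gapCount a x g = v g} with hS₂def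
  have hSsub : ∀ C ∈ S₁, C ⊆ D₁ := by
    rintro C ⟨x, hx, rfl, _⟩ y hy
    exact hy.1
  have himage : S₂ = (fun C => f '' C) '' S₁ := by
    ext C
    constructor
    · rintro ⟨z, hz, rfl, hgapz⟩
      obtain ⟨x, hx, rfl⟩ := hbij.surjOn hz
      refine ⟨{y ∈ D₁ | SameOrderType a x y}, ⟨x, hx, rfl, fun g => ?_⟩,
        by simpa using (himg x hx)⟩
      rw [hgap x hx g]; exact hgapz g
    · rintro ⟨C₀, ⟨x, hx, rfl, hgapx⟩, rfl⟩
      refine ⟨f x, hbij.mapsTo hx, by simpa using (himg x hx), fun g => ?_⟩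
      rw [← hgap x hx g]; exact hgapx g
  have hinjS : Set.InjOn (fun C => f '' C) S₁ := by
    intro C hC C' hC' he
    simp only at he
    have h1 : C ⊆ D₁ := hSsub C hC
    have h2 : C' ⊆ D₁ := hSsub C' hC'
    apply Set.Subset.antisymm
    · intro y hy
      have : f y ∈ f '' C' := by rw [← he]; exact ⟨y, hy, rfl⟩
      obtain ⟨y', hy', hyy'⟩ := this
      rwa [← hbij.injOn (h2 hy') (h1 hy) hyy']
    · intro y hy
      have : f y ∈ f '' C := by rw [he]; exact ⟨y, hy, rfl⟩
      obtain ⟨y', hy', hyy'⟩ := this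
      rwa [← hbij.injOn (h1 hy') (h2 hy) hyy']
  show Set.ncard S₁ = Set.ncard S₂
  rw [himage, Set.ncard_image_of_injOn hinjS]
end

section
/- Let Q be a nonempty dense linear order without endpoints, let A ⊆ Q be a finite parameter set, and let D₁, D₂ ⊆ Q^n be A-definable sets. Define the height H(D) of a set D ⊆ Q^n as the maximum, over points x ∈ D, of the number of distinct values among the coordinates x_1,…,x_n that do not belong to A (with H(∅) = 0). If H(D₁) ≠ H(D₂), then there is no definable bijection from D₁ onto D₂. -/
open FirstOrder FirstOrder.Language

attribute [local instance] FirstOrder.Language.orderStructure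

set_option linter.unusedSectionVars false
set_option linter.unusedVariables false
set_option linter.unusedTactic false

/-- The height of `D ⊆ Q^n` relative to a parameter set `A`: the maximum over `x ∈ D` of the
number of distinct coordinate values of `x` not lying in `A` (`0` for the empty set). -/
noncomputable def height {Q : Type*} {n : ℕ} (A : Set Q) (D : Set (Fin n → Q)) : ℕ :=
  sSup ((fun x : Fin n → Q => Set.ncard {q : Q | (∃ i, x i = q) ∧ q ∉ A}) '' D)

section Aux

variable {Q : Type*} [LinearOrder Q] [DenselyOrdered Q] [NoMinOrder Q] [NoMaxOrder Q] [Nonempty Q]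

lemma exists_between_avoid {s t C : Set Q} (hs : s.Finite) (ht : t.Finite) (hC : C.Finite)
    (hst : ∀ x ∈ s, ∀ y ∈ t, x < y) :
    ∃ b, b ∉ C ∧ (∀ x ∈ s, x < b) ∧ (∀ y ∈ t, b < y) := by
  rcases s.eq_empty_or_nonempty with rfl | hsne
  · rcases t.eq_empty_or_nonempty with rfl | htne
    · obtain ⟨a⟩ := (inferInstance : Nonempty Q)
      obtain ⟨b, hb⟩ := ((Set.Ioi_infinite a).diff hC).nonempty
      exact ⟨b, hb.2, by simp, by simp⟩
    · obtain ⟨M, hMt, hMmin⟩ := Set.exists_min_image t id ht htne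
      obtain ⟨b, hb⟩ := ((Set.Iio_infinite M).diff hC).nonempty
      exact ⟨b, hb.2, by simp, fun y hy => lt_of_lt_of_le hb.1 (hMmin y hy)⟩
  · obtain ⟨m, hms, hmmax⟩ := Set.exists_max_image s id hs hsne
    rcases t.eq_empty_or_nonempty with rfl | htne
    · obtain ⟨b, hb⟩ := ((Set.Ioi_infinite m).diff hC).nonempty
      exact ⟨b, hb.2, fun x hx => lt_of_le_of_lt (hmmax x hx) hb.1, by simp⟩
    · obtain ⟨M, hMt, hMmin⟩ := Set.exists_min_image t id ht htne
      obtain ⟨b, hb⟩ := ((Set.Ioo_infinite (hst m hms M hMt)).diff hC).nonempty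
      exact ⟨b, hb.2, fun x hx => lt_of_le_of_lt (hmmax x hx) hb.1.1,
        fun y hy => lt_of_lt_of_le hb.1.2 (hMmin y hy)⟩

lemma aux_extend {ι : Type*} [Finite ι] (V W : ι → Q) (h : ∀ i j, V i ≤ V j ↔ W i ≤ W j)
    (a : Q) : ∃ b, ∀ i, (V i ≤ a ↔ W i ≤ b) ∧ (a ≤ V i ↔ b ≤ W i) := by
  by_cases hex : ∃ i, V i = a
  · obtain ⟨i, rfl⟩ := hex
    exact ⟨W i, fun j => ⟨h j i, h i j⟩⟩
  · push_neg at hex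
    have hlt : ∀ i j, V i < V j → W i < W j := fun i j hij =>
      lt_of_le_not_ge ((h i j).1 hij.le) (fun hc => hij.not_ge ((h j i).2 hc))
    obtain ⟨b, -, hbs, hbt⟩ := exists_between_avoid
      (s := W '' {i | V i < a}) (t := W '' {i | a < V i}) (C := (∅ : Set Q))
      ((Set.toFinite _).image W) ((Set.toFinite _).image W) (Set.finite_empty)
      (by rintro x ⟨i, hi, rfl⟩ y ⟨j, hj, rfl⟩; exact hlt i j (hi.trans hj))
    refine ⟨b, fun i => ?_⟩
    rcases (hex i).lt_or_gt with hia | hia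
    · have hw : W i < b := hbs _ ⟨i, hia, rfl⟩
      exact ⟨⟨fun _ => hw.le, fun _ => hia.le⟩,
        ⟨fun hai => absurd hai (not_le.2 hia), fun hbw => absurd hbw (not_le.2 hw)⟩⟩
    · have hw : b < W i := hbt _ ⟨i, hia, rfl⟩
      exact ⟨⟨fun hva => absurd hva (not_le.2 hia), fun hwb => absurd hwb (not_le.2 hw)⟩,
        ⟨fun _ => hw.le, fun _ => hia.le⟩⟩

lemma order_term_val {α : Type*} (t : Language.order.Term α) :
    ∃ i, ∀ v : α → Q, t.realize v = v i := by
  cases t with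
  | var i => exact ⟨i, fun _ => rfl⟩
  | func f ts => exact isEmptyElim f

/-- index translation for `snoc`. -/
def extIdx {γ : Type*} {k : ℕ} : γ ⊕ Fin (k + 1) → (γ ⊕ Fin k) ⊕ Unit
  | .inl i => .inl (.inl i)
  | .inr i => Fin.lastCases (.inr ()) (fun i' => .inl (.inr i')) i

lemma elim_snoc_eq {γ : Type*} {k : ℕ} (U : γ → Q) (us : Fin k → Q) (c : Q)
    (i : γ ⊕ Fin (k + 1)) :
    Sum.elim U (Fin.snoc us c) i = Sum.elim (Sum.elim U us) (fun _ : Unit => c) (extIdx i) := by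
  rcases i with i | i
  · rfl
  · refine Fin.lastCases ?_ (fun i' => ?_) i
    · simp [extIdx]
    · simp [extIdx]

lemma snoc_equiv {γ : Type*} {k : ℕ} {V W : γ → Q} {xs ys : Fin k → Q} {a b : Q}
    (h : ∀ i j, Sum.elim V xs i ≤ Sum.elim V xs j ↔ Sum.elim W ys i ≤ Sum.elim W ys j)
    (hb : ∀ i, (Sum.elim V xs i ≤ a ↔ Sum.elim W ys i ≤ b) ∧
      (a ≤ Sum.elim V xs i ↔ b ≤ Sum.elim W ys i)) :
    ∀ i j, Sum.elim V (Fin.snoc xs a) i ≤ Sum.elim V (Fin.snoc xs a) j ↔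
      Sum.elim W (Fin.snoc ys b) i ≤ Sum.elim W (Fin.snoc ys b) j := by
  intro i j
  rw [elim_snoc_eq, elim_snoc_eq, elim_snoc_eq, elim_snoc_eq]
  rcases extIdx i with i' | _ <;> rcases extIdx j with j' | _
  · exact h i' j'
  · exact (hb i').1
  · exact (hb j').2
  · simp

lemma order_realize_iff {γ : Type*} [Finite γ] {k : ℕ} (φ : Language.order.BoundedFormula γ k)
    (V W : γ → Q) : ∀ (xs ys : Fin k → Q),
    (∀ i j, Sum.elim V xs i ≤ Sum.elim V xs j ↔ Sum.elim W ys i ≤ Sum.elim W ys j) →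
    (φ.Realize V xs ↔ φ.Realize W ys) := by
  induction φ with
  | falsum => exact fun _ _ _ => Iff.rfl
  | equal t₁ t₂ =>
    intro xs ys h
    obtain ⟨i, hi⟩ := order_term_val (Q := Q) t₁
    obtain ⟨j, hj⟩ := order_term_val (Q := Q) t₂
    show t₁.realize (Sum.elim V xs) = t₂.realize (Sum.elim V xs) ↔
      t₁.realize (Sum.elim W ys) = t₂.realize (Sum.elim W ys)
    rw [hi, hj, hi, hj]
    exact ⟨fun e => le_antisymm ((h i j).1 e.le) ((h j i).1 e.ge),
      fun e => le_antisymm ((h i j).2 e.le) ((h j i).2 e.ge)⟩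
  | rel R ts =>
    intro xs ys h
    cases R
    obtain ⟨i, hi⟩ := order_term_val (Q := Q) (ts 0)
    obtain ⟨j, hj⟩ := order_term_val (Q := Q) (ts 1)
    show (ts 0).realize (Sum.elim V xs) ≤ (ts 1).realize (Sum.elim V xs) ↔
      (ts 0).realize (Sum.elim W ys) ≤ (ts 1).realize (Sum.elim W ys)
    rw [hi, hj, hi, hj]
    exact h i j
  | imp φ ψ ihφ ihψ =>
    intro xs ys h
    exact imp_congr (ihφ xs ys h) (ihψ xs ys h)
  | all φ ih =>
    intro xs ys h
    show (∀ a, φ.Realize V (Fin.snoc xs a)) ↔ ∀ b, φ.Realize W (Fin.snoc ys b)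
    constructor
    · intro H b
      obtain ⟨a, ha⟩ := aux_extend (Sum.elim W ys) (Sum.elim V xs) (fun i j => (h i j).symm) b
      exact (ih (Fin.snoc xs a) (Fin.snoc ys b)
        (snoc_equiv h (fun i => ⟨(ha i).1.symm, (ha i).2.symm⟩))).1 (H a)
    · intro H a
      obtain ⟨b, hb⟩ := aux_extend (Sum.elim V xs) (Sum.elim W ys) h a
      exact (ih (Fin.snoc xs a) (Fin.snoc ys b) (snoc_equiv h hb)).2 (H b)

lemma definable_invariant_s5 {A : Set Q} (hA : A.Finite) {α : Type*} [Finite α]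
    {s : Set (α → Q)} (hs : A.Definable Language.order s) {v w : α → Q}
    (h1 : ∀ i j, v i ≤ v j ↔ w i ≤ w j)
    (h2 : ∀ i, ∀ a ∈ A, (v i ≤ a ↔ w i ≤ a) ∧ (a ≤ v i ↔ a ≤ w i)) :
    v ∈ s ↔ w ∈ s := by
  obtain ⟨φ, rfl⟩ := Set.definable_iff_exists_formula_sum.mp hs
  haveI : Finite A := hA
  simp only [Set.mem_setOf_eq]
  refine order_realize_iff φ (Sum.elim (↑) v) (Sum.elim (↑) w) default default ?_
  rintro ((⟨a, ha⟩ | i) | i0) ((⟨a', ha'⟩ | j) | j0)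
  · exact Iff.rfl
  · exact (h2 j a ha).2
  · exact isEmptyElim j0
  · exact (h2 i a' ha').1
  · exact h1 i j
  · exact isEmptyElim j0
  · exact isEmptyElim i0
  · exact isEmptyElim i0
  · exact isEmptyElim i0

end Aux

section Aux2

variable {Q : Type*} [LinearOrder Q] [DenselyOrdered Q] [NoMinOrder Q] [NoMaxOrder Q] [Nonempty Q]

lemma exists_perturb_s5 {S : Set Q} (hS : S.Finite) {q : Q} (hq : q ∉ S) :
    ∃ q', q' ∉ S ∧ q' ≠ q ∧ ∀ p ∈ S, (p ≤ q ↔ p ≤ q') ∧ (q ≤ p ↔ q' ≤ p) := by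
  obtain ⟨b, hbC, hbs, hbt⟩ := exists_between_avoid
    (s := {p ∈ S | p < q}) (t := {p ∈ S | q < p}) (C := S ∪ {q})
    (hS.subset (Set.sep_subset _ _)) (hS.subset (Set.sep_subset _ _))
    (hS.union (Set.finite_singleton q))
    (by rintro x ⟨hxS, hxq⟩ y ⟨hyS, hyq⟩; exact hxq.trans hyq)
  have hbS : b ∉ S := fun h => hbC (Set.mem_union_left _ h)
  have hbq : b ≠ q := fun h => hbC (Set.mem_union_right _ (by simp [h]))
  refine ⟨b, hbS, hbq, fun p hp => ?_⟩
  have hpq : p ≠ q := fun h => hq (h ▸ hp)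
  rcases hpq.lt_or_gt with hlt | hlt
  · have hpb : p < b := hbs p ⟨hp, hlt⟩
    exact ⟨⟨fun _ => hpb.le, fun _ => hlt.le⟩,
      ⟨fun hc => absurd hc (not_le.2 hlt), fun hc => absurd hc (not_le.2 hpb)⟩⟩
  · have hbp : b < p := hbt p ⟨hp, hlt⟩
    exact ⟨⟨fun hc => absurd hc (not_le.2 hlt), fun hc => absurd hc (not_le.2 hbp)⟩,
      ⟨fun _ => hbp.le, fun _ => hlt.le⟩⟩

lemma mem_perturb {α : Type*} [Finite α] {B : Set Q} (hB : B.Finite)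
    {s : Set (α → Q)} (hs : B.Definable Language.order s) {z : α → Q} (hz : z ∈ s)
    {q : Q} (hqB : q ∉ B) :
    ∃ q', q' ≠ q ∧ (fun i => if z i = q then q' else z i) ∈ s := by
  have hSfin : ((B ∪ Set.range z) \ {q}).Finite := (hB.union (Set.finite_range z)).diff
  have hqS : q ∉ (B ∪ Set.range z) \ {q} := fun h => h.2 rfl
  obtain ⟨q', hq'S, hq'q, hcut⟩ := exists_perturb_s5 hSfin hqS
  refine ⟨q', hq'q, ?_⟩
  have hmemS : ∀ i, z i ≠ q → z i ∈ (B ∪ Set.range z) \ {q} :=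
    fun i hne => ⟨Or.inr ⟨i, rfl⟩, hne⟩
  refine (definable_invariant_s5 hB hs ?_ ?_).1 hz
  · intro i j
    by_cases hi : z i = q <;> by_cases hj : z j = q
    · rw [if_pos hi, if_pos hj, hi, hj]
      exact iff_of_true le_rfl le_rfl
    · rw [if_pos hi, if_neg hj, hi]
      exact (hcut (z j) (hmemS j hj)).2
    · rw [if_neg hi, if_pos hj, hj]
      exact (hcut (z i) (hmemS i hi)).1
    · rw [if_neg hi, if_neg hj]
  · intro i a ha
    have haS : a ∈ (B ∪ Set.range z) \ {q} :=
      ⟨Or.inl ha, fun h => hqB (by rw [Set.mem_singleton_iff] at h; rwa [h] at ha)⟩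
    by_cases hi : z i = q
    · rw [if_pos hi, hi]
      exact ⟨(hcut a haS).2, (hcut a haS).1⟩
    · rw [if_neg hi]
      exact ⟨Iff.rfl, Iff.rfl⟩

lemma exists_move {A B : Set Q} (hA : A.Finite) (hB : B.Finite) (hAB : A ⊆ B) {T : Set Q}
    (hT : T.Finite) :
    ∃ h : Q → Q, (∀ p ∈ T, ∀ q ∈ T, (p ≤ q ↔ h p ≤ h q))
      ∧ (∀ p ∈ T, ∀ a ∈ A, (p ≤ a ↔ h p ≤ a) ∧ (a ≤ p ↔ a ≤ h p))
      ∧ (∀ p ∈ T, p ∉ A → h p ∉ B)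
      ∧ (∀ p ∈ T, p ∈ A → h p = p) := by
  refine Set.Finite.induction_on _ hT ⟨id, by simp, by simp, by simp, by simp⟩
    @fun a T haT hTfin ih => ?_
  obtain ⟨h, hh1, hh2, hh3, hh4⟩ := ih
  have hstrict : ∀ p ∈ T, ∀ q ∈ T, p < q → h p < h q := fun p hp q hq hlt =>
    lt_of_le_not_ge ((hh1 p hp q hq).1 hlt.le) (fun hc => hlt.not_ge ((hh1 q hq p hp).2 hc))
  have memT : ∀ p, p ∈ insert a T → p ≠ a → p ∈ T :=
    fun p hp hpa => (Set.mem_insert_iff.mp hp).resolve_left hpa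
  by_cases haA : a ∈ A
  · refine ⟨fun p => if p = a then a else h p, ?_, ?_, ?_, ?_⟩
    · intro p hp q hq
      beta_reduce
      by_cases hpa : p = a <;> by_cases hqa : q = a
      · rw [if_pos hpa, if_pos hqa, hpa, hqa]
      · rw [if_pos hpa, if_neg hqa, hpa]
        exact (hh2 q (memT q hq hqa) a haA).2
      · rw [if_neg hpa, if_pos hqa, hqa]
        exact (hh2 p (memT p hp hpa) a haA).1
      · rw [if_neg hpa, if_neg hqa]
        exact hh1 p (memT p hp hpa) q (memT q hq hqa)
    · intro p hp c hc
      beta_reduce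
      by_cases hpa : p = a
      · rw [if_pos hpa, hpa]
        exact ⟨Iff.rfl, Iff.rfl⟩
      · rw [if_neg hpa]
        exact hh2 p (memT p hp hpa) c hc
    · intro p hp hpA
      beta_reduce
      by_cases hpa : p = a
      · exact (hpA (hpa ▸ haA)).elim
      · rw [if_neg hpa]
        exact hh3 p (memT p hp hpa) hpA
    · intro p hp hpA
      beta_reduce
      by_cases hpa : p = a
      · rw [if_pos hpa, hpa]
      · rw [if_neg hpa]
        exact hh4 p (memT p hp hpa) hpA
  · have hstrict2 : ∀ p ∈ T, ∀ d ∈ A, p < d → h p < d := fun p hp d hd hlt =>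
      lt_of_le_not_ge ((hh2 p hp d hd).1.1 hlt.le)
        (fun hc => hlt.not_ge ((hh2 p hp d hd).2.2 hc))
    have hstrict3 : ∀ c ∈ A, ∀ q ∈ T, c < q → c < h q := fun c hc q hq hlt =>
      lt_of_le_not_ge ((hh2 q hq c hc).2.1 hlt.le)
        (fun hc2 => hlt.not_ge ((hh2 q hq c hc).1.2 hc2))
    obtain ⟨b, hbB, hbs, hbt⟩ := exists_between_avoid
      (s := (h '' {p ∈ T | p < a}) ∪ {c ∈ A | c < a})
      (t := (h '' {p ∈ T | a < p}) ∪ {c ∈ A | a < c}) (C := B)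
      (((hTfin.subset (Set.sep_subset _ _)).image h).union (hA.subset (Set.sep_subset _ _)))
      (((hTfin.subset (Set.sep_subset _ _)).image h).union (hA.subset (Set.sep_subset _ _)))
      hB
      (by
        rintro x (⟨p, ⟨hpT, hpa⟩, rfl⟩ | ⟨hcA, hca⟩) y (⟨q, ⟨hqT, haq⟩, rfl⟩ | ⟨hdA, had⟩)
        · exact hstrict p hpT q hqT (hpa.trans haq)
        · exact hstrict2 p hpT y hdA (hpa.trans had)
        · exact hstrict3 x hcA q hqT (hca.trans haq)
        · exact hca.trans had)
    have fact1 : ∀ q ∈ T, q < a → h q < b := fun q hq hlt => hbs _ (Or.inl ⟨q, ⟨hq, hlt⟩, rfl⟩)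
    have fact2 : ∀ q ∈ T, a < q → b < h q := fun q hq hlt => hbt _ (Or.inl ⟨q, ⟨hq, hlt⟩, rfl⟩)
    have fact3 : ∀ c ∈ A, c < a → c < b := fun c hc hlt => hbs _ (Or.inr ⟨hc, hlt⟩)
    have fact4 : ∀ c ∈ A, a < c → b < c := fun c hc hlt => hbt _ (Or.inr ⟨hc, hlt⟩)
    have hne : ∀ q ∈ T, q ≠ a := fun q hq hc => haT (hc ▸ hq)
    refine ⟨fun p => if p = a then b else h p, ?_, ?_, ?_, ?_⟩
    · intro p hp q hq
      beta_reduce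
      by_cases hpa : p = a <;> by_cases hqa : q = a
      · rw [if_pos hpa, if_pos hqa, hpa, hqa]
        exact iff_of_true le_rfl le_rfl
      · have hqT := memT q hq hqa
        rw [if_pos hpa, if_neg hqa, hpa]
        rcases (hne q hqT).lt_or_gt with hlt | hlt
        · exact iff_of_false (not_le.2 hlt) (not_le.2 (fact1 q hqT hlt))
        · exact iff_of_true hlt.le (fact2 q hqT hlt).le
      · have hpT := memT p hp hpa
        rw [if_neg hpa, if_pos hqa, hqa]
        rcases (hne p hpT).lt_or_gt with hlt | hlt
        · exact iff_of_true hlt.le (fact1 p hpT hlt).le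
        · exact iff_of_false (not_le.2 hlt) (not_le.2 (fact2 p hpT hlt))
      · rw [if_neg hpa, if_neg hqa]
        exact hh1 p (memT p hp hpa) q (memT q hq hqa)
    · intro p hp c hc
      beta_reduce
      by_cases hpa : p = a
      · rw [if_pos hpa, hpa]
        have hac : a ≠ c := fun hc' => haA (hc' ▸ hc)
        rcases hac.lt_or_gt with hlt | hlt
        · exact ⟨iff_of_true hlt.le (fact4 c hc hlt).le,
            iff_of_false (not_le.2 hlt) (not_le.2 (fact4 c hc hlt))⟩
        · exact ⟨iff_of_false (not_le.2 hlt) (not_le.2 (fact3 c hc hlt)),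
            iff_of_true hlt.le (fact3 c hc hlt).le⟩
      · rw [if_neg hpa]
        exact hh2 p (memT p hp hpa) c hc
    · intro p hp hpA
      beta_reduce
      by_cases hpa : p = a
      · rw [if_pos hpa]; exact hbB
      · rw [if_neg hpa]
        exact hh3 p (memT p hp hpa) hpA
    · intro p hp hpA
      beta_reduce
      by_cases hpa : p = a
      · exact (haA (hpa ▸ hpA)).elim
      · rw [if_neg hpa]
        exact hh4 p (memT p hp hpa) hpA


lemma nvals_le {k : ℕ} (x : Fin k → Q) (A : Set Q) : (Set.range x \ A).ncard ≤ k := by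
  calc (Set.range x \ A).ncard ≤ (Set.range x).ncard :=
        Set.ncard_le_ncard Set.diff_subset (Set.finite_range x)
    _ = (x '' Set.univ).ncard := by rw [Set.image_univ]
    _ ≤ (Set.univ : Set (Fin k)).ncard := Set.ncard_image_le Set.finite_univ
    _ = k := by rw [Set.ncard_univ, Nat.card_eq_fintype_card, Fintype.card_fin]

lemma height_le {n m : ℕ} {D₁ : Set (Fin n → Q)} {D₂ : Set (Fin m → Q)} {A B : Set Q}
    (h : ∀ x ∈ D₁, ∃ y ∈ D₂, (Set.range x \ A).ncard ≤ (Set.range y \ B).ncard) :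
    height A D₁ ≤ height B D₂ := by
  show sSup ((fun x : Fin n → Q => (Set.range x \ A).ncard) '' D₁) ≤
    sSup ((fun y : Fin m → Q => (Set.range y \ B).ncard) '' D₂)
  rcases D₁.eq_empty_or_nonempty with rfl | hne
  · simp
  · refine csSup_le (hne.image _) ?_
    rintro _ ⟨x, hx, rfl⟩
    obtain ⟨y, hy, hxy⟩ := h x hx
    refine hxy.trans (le_csSup ⟨m, ?_⟩ ⟨y, hy, rfl⟩)
    rintro _ ⟨y', _, rfl⟩
    exact nvals_le y' B

lemma height_eq_of_subset {n : ℕ} {A B : Set Q} (hA : A.Finite) (hB : B.Finite) (hAB : A ⊆ B)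
    {D : Set (Fin n → Q)} (hD : A.Definable Language.order D) :
    height A D = height B D := by
  refine le_antisymm (height_le ?_) (height_le ?_)
  · intro x hx
    obtain ⟨h, hm1, hm2, hm3, hm4⟩ := exists_move hA hB hAB (Set.finite_range x)
    refine ⟨h ∘ x, ?_, ?_⟩
    · exact (definable_invariant_s5 hA hD (fun i j => hm1 _ ⟨i, rfl⟩ _ ⟨j, rfl⟩)
        (fun i a ha => hm2 _ ⟨i, rfl⟩ a ha)).1 hx
    · have hsub : h '' (Set.range x \ A) ⊆ Set.range (h ∘ x) \ B := by
        rintro _ ⟨q, ⟨⟨i, rfl⟩, hqA⟩, rfl⟩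
        exact ⟨⟨i, rfl⟩, hm3 _ ⟨i, rfl⟩ hqA⟩
      have hinj : Set.InjOn h (Set.range x \ A) := by
        rintro p ⟨⟨i, rfl⟩, -⟩ q ⟨⟨j, rfl⟩, -⟩ hpq
        exact le_antisymm ((hm1 _ ⟨i, rfl⟩ _ ⟨j, rfl⟩).2 hpq.le)
          ((hm1 _ ⟨j, rfl⟩ _ ⟨i, rfl⟩).2 hpq.ge)
      calc (Set.range x \ A).ncard = (h '' (Set.range x \ A)).ncard :=
            (Set.ncard_image_of_injOn hinj).symm
        _ ≤ (Set.range (h ∘ x) \ B).ncard :=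
            Set.ncard_le_ncard hsub ((Set.finite_range (h ∘ x)).diff)
  · intro x hx
    refine ⟨x, hx, Set.ncard_le_ncard ?_ ((Set.finite_range x).diff)⟩
    exact Set.diff_subset_diff_right hAB

lemma range_eq_of_graph {n m : ℕ} {B : Set Q} (hB : B.Finite)
    {D₁ : Set (Fin n → Q)} {f : (Fin n → Q) → (Fin m → Q)}
    (hf : Set.InjOn f D₁)
    (hG : B.Definable Language.order (graphOn D₁ f))
    {x : Fin n → Q} (hx : x ∈ D₁) :
    Set.range x \ B = Set.range (f x) \ B := by
  have hzmem : Fin.append x (f x) ∈ graphOn D₁ f := ⟨x, hx, rfl⟩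
  ext q
  constructor
  · rintro ⟨⟨i, rfl⟩, hqB⟩
    refine ⟨?_, hqB⟩
    by_contra hqfx
    obtain ⟨q', hq'q, hmem⟩ := mem_perturb hB hG hzmem hqB
    set z := Fin.append x (f x) with hzdef
    have hz' : (fun j => if z j = x i then q' else z j) =
        Fin.append (fun i' => if x i' = x i then q' else x i') (f x) := by
      funext j
      refine Fin.addCases (fun i' => ?_) (fun j' => ?_) j
      · beta_reduce
        rw [hzdef, Fin.append_left, Fin.append_left]
      · beta_reduce
        rw [hzdef, Fin.append_right, Fin.append_right,
          if_neg (fun hc : f x j' = x i => hqfx ⟨j', hc⟩)]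
    rw [hz'] at hmem
    obtain ⟨x₀, hx₀, heq⟩ := hmem
    have h1 : (fun i' => if x i' = x i then q' else x i') = x₀ := funext fun i' => by
      simpa [Fin.append_left] using congrFun heq (Fin.castAdd m i')
    have h2 : f x = f x₀ := funext fun j' => by
      simpa [Fin.append_right] using congrFun heq (Fin.natAdd n j')
    have hx'D : (fun i' => if x i' = x i then q' else x i') ∈ D₁ := h1 ▸ hx₀
    have : (fun i' => if x i' = x i then q' else x i') = x := by
      refine hf hx'D hx ?_
      rw [h1, ← h2]
    have := congrFun this i
    simp at this
    exact hq'q this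
  · rintro ⟨⟨j, rfl⟩, hqB⟩
    refine ⟨?_, hqB⟩
    by_contra hqx
    obtain ⟨q', hq'q, hmem⟩ := mem_perturb hB hG hzmem hqB
    set z := Fin.append x (f x) with hzdef
    have hz' : (fun i' => if z i' = f x j then q' else z i') =
        Fin.append x (fun j' => if f x j' = f x j then q' else f x j') := by
      funext i'
      refine Fin.addCases (fun i'' => ?_) (fun j' => ?_) i'
      · beta_reduce
        rw [hzdef, Fin.append_left, Fin.append_left,
          if_neg (fun hc : x i'' = f x j => hqx ⟨i'', hc⟩)]
      · beta_reduce
        rw [hzdef, Fin.append_right, Fin.append_right]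
    rw [hz'] at hmem
    obtain ⟨x₀, hx₀, heq⟩ := hmem
    have h1 : x = x₀ := funext fun i' => by
      simpa [Fin.append_left] using congrFun heq (Fin.castAdd m i')
    have h2 : (fun j' => if f x j' = f x j then q' else f x j') = f x₀ := funext fun j' => by
      simpa [Fin.append_right] using congrFun heq (Fin.natAdd n j')
    rw [← h1] at h2
    have := congrFun h2 j
    simp at this
    exact hq'q this

end Aux2

/-- `A`-definable sets of different heights are not in definable bijection. -/
theorem dlo_height_ne_no_defBij {Q : Type*} [LinearOrder Q] [DenselyOrdered Q] [NoMinOrder Q]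
    [NoMaxOrder Q] [Nonempty Q] {n : ℕ} (A : Finset Q) (D₁ D₂ : Set (Fin n → Q))
    (h₁ : (A : Set Q).Definable Language.order D₁)
    (h₂ : (A : Set Q).Definable Language.order D₂)
    (hH : height (A : Set Q) D₁ ≠ height (A : Set Q) D₂) : ¬ DefBij D₁ D₂ := by
  rintro ⟨f, hbij, A₀, hA₀, hGdef⟩
  set B : Set Q := ↑A ∪ A₀ with hBdef
  have hBfin : B.Finite := A.finite_toSet.union hA₀
  have hG : B.Definable Language.order (graphOn D₁ f) := hGdef.mono Set.subset_union_right
  have key : ∀ x ∈ D₁, Set.range x \ B = Set.range (f x) \ B :=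
    fun x hx => range_eq_of_graph hBfin hbij.injOn hG hx
  have e1 : height (↑A : Set Q) D₁ = height B D₁ :=
    height_eq_of_subset A.finite_toSet hBfin Set.subset_union_left h₁
  have e2 : height (↑A : Set Q) D₂ = height B D₂ :=
    height_eq_of_subset A.finite_toSet hBfin Set.subset_union_left h₂
  have e3 : height B D₁ = height B D₂ := by
    refine le_antisymm (height_le ?_) (height_le ?_)
    · intro x hx
      exact ⟨f x, hbij.mapsTo hx, le_of_eq (by rw [key x hx])⟩
    · intro y hy
      obtain ⟨x, hx, rfl⟩ := hbij.surjOn hy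
      exact ⟨x, hx, le_of_eq (by rw [key x hx])⟩
  exact hH (e1.trans (e3.trans e2.symm))
end

section
/- Let Q be a nonempty dense linear order without endpoints and let D ⊆ Q^n be definable without parameters (∅-definable). If x, y ∈ Q^n satisfy x_i < x_j ⟺ y_i < y_j for all indices i, j, then x ∈ D if and only if y ∈ D. (Consequently, the nonempty sets of points realizing a fixed order pattern of the coordinates — the related sets — are exactly the atoms of the finite Boolean algebra of ∅-definable subsets of Q^n.) -/
open FirstOrder FirstOrder.Language

attribute [local instance] FirstOrder.Language.orderStructure

private instance aux_orderedStructure {M : Type*} [LE M] :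
    Language.order.OrderedStructure M := ⟨fun _ => Iff.rfl⟩

/-- The formula expressing that a tuple of variables realizes the `≤`-pattern `p`. -/
noncomputable def patForm {n : ℕ} (p : Fin n → Fin n → Bool) :
    Language.order.Formula (Fin n) :=
  BoundedFormula.iInf (fun ij : Fin n × Fin n =>
    if p ij.1 ij.2 then
      Term.le (L := Language.order) (var (Sum.inl ij.1)) (var (Sum.inl ij.2))
    else
      (Term.le (L := Language.order) (var (Sum.inl ij.1)) (var (Sum.inl ij.2))).not)

lemma realize_patForm {n : ℕ} (p : Fin n → Fin n → Bool) {M : Type*} [LinearOrder M]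
    (v : Fin n → M) :
    (patForm p).Realize v ↔ ∀ i j, (v i ≤ v j ↔ p i j = true) := by
  unfold patForm
  rw [Formula.Realize, BoundedFormula.realize_iInf]
  constructor
  · intro h i j
    have := h (i, j)
    by_cases hp : p i j = true
    · rw [if_pos hp] at this
      simp only [Term.realize_le, Term.realize_var, Sum.elim_inl] at this
      exact iff_of_true this hp
    · rw [if_neg hp, BoundedFormula.realize_not] at this
      simp only [Term.realize_le, Term.realize_var, Sum.elim_inl] at this
      exact iff_of_false this hp
  · intro h ij
    by_cases hp : p ij.1 ij.2 = true
    · rw [if_pos hp]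
      simp only [Term.realize_le, Term.realize_var, Sum.elim_inl]
      exact (h ij.1 ij.2).2 hp
    · rw [if_neg hp, BoundedFormula.realize_not]
      simp only [Term.realize_le, Term.realize_var, Sum.elim_inl]
      exact fun hle => hp ((h ij.1 ij.2).1 hle)

/-- An order automorphism of ℚ carrying one tuple to another with the same `≤`-pattern. -/
lemma rat_exists_auto {n : ℕ} (u w : Fin n → ℚ)
    (h : ∀ i j, u i ≤ u j ↔ w i ≤ w j) :
    ∃ g : ℚ ≃[Language.order] ℚ, ∀ i, g (u i) = w i := by
  classical
  let S : Language.order.Substructure ℚ :=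
    Substructure.closure Language.order (Set.range u)
  have hFG : S.FG := Substructure.fg_closure (Set.finite_range u)
  have hmemS : ∀ i, u i ∈ S := fun i =>
    Substructure.subset_closure (L := Language.order) (Set.mem_range_self i)
  have hmem : ∀ s : S, ∃ i, u i = (s : ℚ) := fun s =>
    (Substructure.mem_closure_iff_of_isRelational Language.order (Set.range u) (s : ℚ)).mp s.2
  let f : S → ℚ := fun s => w (hmem s).choose
  have hf : ∀ (s : S) (i : Fin n), u i = (s : ℚ) → f s = w i := by
    intro s i hi
    have h1 : u (hmem s).choose = (s : ℚ) := (hmem s).choose_spec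
    have h2 : u i ≤ u (hmem s).choose := by rw [hi, h1]
    have h3 : u (hmem s).choose ≤ u i := by rw [hi, h1]
    exact le_antisymm ((h _ _).1 h3) ((h _ _).1 h2)
  have hle : ∀ s t : S, f s ≤ f t ↔ s ≤ t := by
    intro s t
    have h1 : u (hmem s).choose = (s : ℚ) := (hmem s).choose_spec
    have h2 : u (hmem t).choose = (t : ℚ) := (hmem t).choose_spec
    show w (hmem s).choose ≤ w (hmem t).choose ↔ s ≤ t
    rw [← h, h1, h2]
    exact Subtype.coe_le_coe
  have hinj : Function.Injective f := by
    intro s t hst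
    exact le_antisymm ((hle s t).1 hst.le) ((hle t s).1 hst.ge)
  let fL : @Language.Embedding Language.order ↥S ℚ (Substructure.inducedStructure) _ :=
    @Embedding.mk _ _ _ Substructure.inducedStructure _ ⟨f, hinj⟩
      (fun {k} F _ => isEmptyElim F)
      (fun {k} r xx => by
        match k, r with
        | 2, .le =>
          show f (xx 0) ≤ f (xx 1) ↔ ((xx 0 : ℚ) ≤ (xx 1 : ℚ))
          rw [hle]
          exact Iff.rfl)
  have hultra := (isFraisseLimit_of_countable_nonempty_dlo ℚ).ultrahomogeneous
  obtain ⟨g, hg⟩ := hultra S hFG fL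
  refine ⟨g, fun i => ?_⟩
  have := congrFun (congrArg DFunLike.coe hg) ⟨u i, hmemS i⟩
  simp only [Embedding.comp_apply, Substructure.coe_subtype] at this
  have he : fL ⟨u i, hmemS i⟩ = f ⟨u i, hmemS i⟩ := rfl
  rw [he, hf ⟨u i, hmemS i⟩ i rfl] at this
  exact this.symm

lemma rat_realize_invariant {n : ℕ} (φ : Language.order.Formula (Fin n))
    (u w : Fin n → ℚ) (h : ∀ i j, u i ≤ u j ↔ w i ≤ w j) :
    φ.Realize u ↔ φ.Realize w := by
  obtain ⟨g, hg⟩ := rat_exists_auto u w h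
  have hgu : g ∘ u = w := funext hg
  rw [← hgu]
  exact (StrongHomClass.realize_formula g φ).symm

/-- A `∅`-definable subset of `Q^n` is invariant under maps preserving the order pattern of
the coordinates. -/
theorem dlo_empty_definable_orderType_invariant {Q : Type*} [LinearOrder Q] [DenselyOrdered Q]
    [NoMinOrder Q] [NoMaxOrder Q] [Nonempty Q] {n : ℕ} (D : Set (Fin n → Q))
    (hD : (∅ : Set Q).Definable Language.order D) (x y : Fin n → Q)
    (hxy : ∀ i j, x i < x j ↔ y i < y j) : x ∈ D ↔ y ∈ D := by
  classical
  obtain ⟨φ, hφ⟩ := Set.empty_definable_iff.mp hD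
  subst hφ
  simp only [Set.mem_setOf_eq]
  set p : Fin n → Fin n → Bool := fun i j => decide (x i ≤ x j) with hp
  have hx : ∀ i j, x i ≤ x j ↔ p i j = true := by simp [hp]
  have hle : ∀ i j, x i ≤ x j ↔ y i ≤ y j := by
    intro i j
    rw [← not_lt, ← not_lt, hxy j i]
  have hy : ∀ i j, y i ≤ y j ↔ p i j = true := fun i j => (hle i j).symm.trans (hx i j)
  have hpx : (patForm p).Realize x := (realize_patForm p x).mpr hx
  have hpy : (patForm p).Realize y := (realize_patForm p y).mpr hy
  haveI : Q ⊨ Language.order.dlo := by infer_instance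
  haveI : ℚ ⊨ Language.order.dlo := by infer_instance
  have transfer : ∀ ψ : Language.order.Formula (Fin n),
      (∀ u : Fin n → ℚ, ψ.Realize u) → ∀ v : Fin n → Q, ψ.Realize v := by
    intro ψ hQ v
    set σ : Language.order.Sentence :=
      Formula.iAlls (Fin n) (ψ.relabel (Sum.inr : Fin n → Empty ⊕ Fin n)) with hσ
    have hrat : (ℚ : Type) ⊨ σ := by
      rw [hσ, Sentence.Realize, Formula.realize_iAlls]
      simp only [Formula.realize_relabel]
      intro i
      exact hQ i
    have hQσ : Q ⊨ σ := by
      rw [Theory.IsComplete.realize_sentence_iff dlo_isComplete σ Q,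
        ← Theory.IsComplete.realize_sentence_iff dlo_isComplete σ ℚ]
      exact hrat
    rw [hσ, Sentence.Realize, Formula.realize_iAlls] at hQσ
    simp only [Formula.realize_relabel] at hQσ
    exact hQσ v
  by_cases hpos : ∃ u : Fin n → ℚ, (∀ i j, (u i ≤ u j ↔ p i j = true)) ∧ φ.Realize u
  · obtain ⟨u₀, hu₀, hφu₀⟩ := hpos
    have key : ∀ v : Fin n → Q, ((patForm p).imp φ).Realize v := by
      apply transfer
      intro u
      rw [Formula.realize_imp]
      intro hu
      rw [realize_patForm] at hu
      exact (rat_realize_invariant φ u u₀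
        (fun i j => (hu i j).trans (hu₀ i j).symm)).mpr hφu₀
    exact iff_of_true (Formula.realize_imp.mp (key x) hpx)
      (Formula.realize_imp.mp (key y) hpy)
  · push_neg at hpos
    have key : ∀ v : Fin n → Q, ((patForm p).imp φ.not).Realize v := by
      apply transfer
      intro u
      rw [Formula.realize_imp, Formula.realize_not]
      intro hu
      rw [realize_patForm] at hu
      exact hpos u hu
    exact iff_of_false (Formula.realize_not.mp (Formula.realize_imp.mp (key x) hpx))
      (Formula.realize_not.mp (Formula.realize_imp.mp (key y) hpy))
end
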